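/- arXiv:0801.4853 — 6 statements merged into one kernel-verified Lean document; each statement's English description precedes it below -/
import Mathlib

section
/- For every μ ∈ ℂ with Re μ > 0, every λ in the closed unit disk, and every z₀ ∈ D, the set V(z₀, λ) = {log f(z₀) : f ∈ F_μ(λ)} is a convex subset of ℂ. -/
open Complex Set Metric

noncomputable section

/-- The open unit disk in `ℂ`. -/
def unitDisk : Set ℂ := Metric.ball (0 : ℂ) 1

/-- `P_f(z) = (2π/μ)·(z f'(z)/f(z)) + (1+z)/(1−z)`. -/
def Pfun (μ : ℂ) (f : ℂ → ℂ) (z : ℂ) : ℂ :=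
  2 * (Real.pi : ℂ) / μ * (z * deriv f z / f z) + (1 + z) / (1 - z)

/-- Membership in the class `F_μ`: analytic, non-vanishing on the disk, `f(0) = 1`,
and `Re P_f > 0` on the disk. -/
def memF (μ : ℂ) (f : ℂ → ℂ) : Prop :=
  AnalyticOnNhd ℂ f unitDisk ∧ (∀ z ∈ unitDisk, f z ≠ 0) ∧ f 0 = 1 ∧
    ∀ z ∈ unitDisk, 0 < (Pfun μ f z).re

/-- Membership in the class `F_μ(λ)`: `f ∈ F_μ` with `f'(0) = (μ/π)(λ − 1)`. -/
def memFlam (μ lam : ℂ) (f : ℂ → ℂ) : Prop :=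
  memF μ f ∧ deriv f 0 = μ / (Real.pi : ℂ) * (lam - 1)

/-- The branch of `log f` vanishing at `0`: `log f(z) = ∫₀^z f'(ζ)/f(ζ) dζ`
(integral over the segment from `0` to `z`). -/
def logf (f : ℂ → ℂ) (z : ℂ) : ℂ :=
  ∫ t in (0:ℝ)..1, deriv f (t * z) / f (t * z) * z

/-- The region of variability `V(z₀, λ) = {log f(z₀) : f ∈ F_μ(λ)}`. -/
def Vset (μ lam z₀ : ℂ) : Set ℂ := {w | ∃ f, memFlam μ lam f ∧ w = logf f z₀}

/-- `δ(w, λ) = (w + λ)/(1 + conj(λ) w)`. -/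
def dl (lam w : ℂ) : ℂ := (w + lam) / (1 + (starRingEnd ℂ) lam * w)

/-- `log H_{a,λ}(z) = (μ/π)·∫₀^z (δ(aζ,λ) − 1)/((1 − δ(aζ,λ)ζ)(1 − ζ)) dζ`
(integral over the segment from `0` to `z`). -/
def Hlog (μ lam a z : ℂ) : ℂ :=
  μ / (Real.pi : ℂ) *
    ∫ t in (0:ℝ)..1,
      (dl lam (a * (t * z)) - 1) /
        ((1 - dl lam (a * (t * z)) * (t * z)) * (1 - t * z)) * z

/-- The function `H_{a,λ}(z) = exp(log H_{a,λ}(z))`. -/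
def Hfun (μ lam a z : ℂ) : ℂ := Complex.exp (Hlog μ lam a z)

/-- `c(z, λ)`. -/
def cfun (z lam : ℂ) : ℂ :=
  ((‖z‖ : ℂ) ^ 2 * ((starRingEnd ℂ) z - lam) * (1 - (starRingEnd ℂ) lam)
      - (1 - lam) * (1 - (starRingEnd ℂ) lam * (starRingEnd ℂ) z)) /
    ((1 - z) * (1 - (‖z‖ : ℂ) ^ 2)
      * (1 + (‖z‖ : ℂ) ^ 2 - 2 * ((lam * z).re : ℂ)))

/-- `r(z, λ)`. -/
def rfun (z lam : ℂ) : ℝ :=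
  (1 - ‖lam‖ ^ 2) * ‖z‖ /
    ((1 - ‖z‖ ^ 2) * (1 + ‖z‖ ^ 2 - 2 * (lam * z).re))

/-- A starlike univalent function on the unit disk: analytic, `φ(0) = 0`, `φ'(0) = 1`,
univalent, and `Re(z φ'(z)/φ(z)) > 0` on the disk. -/
def IsStarlike (φ : ℂ → ℂ) : Prop :=
  AnalyticOnNhd ℂ φ unitDisk ∧ φ 0 = 0 ∧ deriv φ 0 = 1 ∧
    Set.InjOn φ unitDisk ∧
    ∀ z ∈ unitDisk, z ≠ 0 → 0 < (z * deriv φ z / φ z).re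

/-- `G(z) = (μ/π)·∫₀^z e^{iθ}ζ/(1 + (conj(λ)e^{iθ} − λ)ζ − e^{iθ}ζ²)² dζ`
(integral over the segment from `0` to `z`). -/
def Gfun (μ lam : ℂ) (θ : ℝ) (z : ℂ) : ℂ :=
  μ / (Real.pi : ℂ) *
    ∫ t in (0:ℝ)..1,
      Complex.exp (θ * Complex.I) * (t * z) /
        (1 + ((starRingEnd ℂ) lam * Complex.exp (θ * Complex.I) - lam) * (t * z)
          - Complex.exp (θ * Complex.I) * (t * z) ^ 2) ^ 2 * z

end


lemma mem_disk_mul {z : ℂ} (hz : z ∈ unitDisk) {t : ℝ} (ht0 : 0 ≤ t) (ht1 : t ≤ 1) :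
    (t : ℂ) * z ∈ unitDisk := by
  simp only [unitDisk, mem_ball, dist_zero_right] at hz ⊢
  calc ‖(t:ℂ) * z‖ = t * ‖z‖ := by
        rw [norm_mul, Complex.norm_real, Real.norm_of_nonneg ht0]
    _ ≤ 1 * ‖z‖ := by nlinarith [norm_nonneg z]
    _ < 1 := by simpa using hz


lemma hasDerivAt_radialInt {q : ℂ → ℂ} (hq : DifferentiableOn ℂ q unitDisk) {z : ℂ}
    (hz : z ∈ unitDisk) :
    HasDerivAt (fun w => ∫ t in (0:ℝ)..1, q ((t:ℂ) * w) * w) (q z) z := by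
  have hopen : IsOpen unitDisk := isOpen_ball
  have hqa : AnalyticOnNhd ℂ q unitDisk := hq.analyticOnNhd hopen
  have hq' : ContinuousOn (deriv q) unitDisk := (hqa.deriv).continuousOn
  have hqc : ContinuousOn q unitDisk := hq.continuousOn
  -- radii
  have hzn : ‖z‖ < 1 := by simpa [unitDisk, mem_ball, dist_zero_right] using hz
  set r : ℝ := (1 + ‖z‖) / 2 with hr
  have hr1 : r < 1 := by simp only [hr]; linarith
  have hzr : ‖z‖ < r := by simp only [hr]; linarith
  have hr0 : 0 ≤ r := by positivity
  set ε : ℝ := (1 - ‖z‖) / 2 with hε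
  have hε0 : 0 < ε := by simp only [hε]; linarith
  have hball : ∀ w ∈ ball z ε, ‖w‖ ≤ r := by
    intro w hw
    have : ‖w - z‖ < ε := by simpa [dist_eq_norm] using hw
    calc ‖w‖ = ‖w - z + z‖ := by ring_nf
      _ ≤ ‖w - z‖ + ‖z‖ := norm_add_le _ _
      _ ≤ r := by simp only [hε, hr] at *; linarith
  have hsub : Metric.closedBall (0:ℂ) r ⊆ unitDisk := by
    intro w hw
    simp only [unitDisk, mem_ball, mem_closedBall, dist_zero_right] at *
    linarith
  -- bounds
  obtain ⟨C, hC⟩ := (isCompact_closedBall (0:ℂ) r).exists_bound_of_continuousOn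
    (hqc.mono hsub)
  obtain ⟨C', hC'⟩ := (isCompact_closedBall (0:ℂ) r).exists_bound_of_continuousOn
    (hq'.mono hsub)
  have htw : ∀ (t : ℝ), t ∈ Set.uIoc (0:ℝ) 1 → ∀ w ∈ ball z ε, (t:ℂ) * w ∈ Metric.closedBall (0:ℂ) r := by
    intro t ht w hw
    rw [Set.uIoc_of_le (by norm_num : (0:ℝ) ≤ 1)] at ht
    have h0 : 0 ≤ t := le_of_lt ht.1
    simp only [mem_closedBall, dist_zero_right, norm_mul, Complex.norm_real,
      Real.norm_of_nonneg h0]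
    have := hball w hw
    nlinarith [norm_nonneg w, ht.2]
  -- derivative of the integrand in w
  have hderiv : ∀ (t : ℝ), t ∈ Set.uIoc (0:ℝ) 1 → ∀ w ∈ ball z ε,
      HasDerivAt (fun x => q ((t:ℂ) * x) * x)
        (deriv q ((t:ℂ)*w) * t * w + q ((t:ℂ)*w)) w := by
    intro t ht w hw
    have hmem : (t:ℂ) * w ∈ unitDisk := hsub (htw t ht w hw)
    have h1 : HasDerivAt (fun x : ℂ => (t:ℂ) * x) (t:ℂ) w := by
      simpa using (hasDerivAt_id w).const_mul (t:ℂ)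
    have hqd : HasDerivAt q (deriv q ((t:ℂ)*w)) ((t:ℂ)*w) :=
      ((hq.differentiableAt (hopen.mem_nhds hmem))).hasDerivAt
    have h2 : HasDerivAt (fun x => q ((t:ℂ)*x)) (deriv q ((t:ℂ)*w) * t) w := hqd.comp w h1
    have := h2.fun_mul (hasDerivAt_id w)
    simpa [mul_comm, mul_assoc, mul_left_comm] using this
  -- apply dominated differentiation
  have key := intervalIntegral.hasDerivAt_integral_of_dominated_loc_of_deriv_le
    (F := fun x t => q ((t:ℂ) * x) * x)
    (F' := fun x t => deriv q ((t:ℂ)*x) * t * x + q ((t:ℂ)*x))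
    (x₀ := z) (a := (0:ℝ)) (b := 1) (μ := MeasureTheory.volume)
    (bound := fun _ => C' + C) (Metric.ball_mem_nhds z hε0) ?_ ?_ ?_ ?_ ?_ ?_
  · -- conclude
    have hF := key.2
    have hint : (∫ t in (0:ℝ)..1, (deriv q ((t:ℂ)*z) * t * z + q ((t:ℂ)*z))) = q z := by
      have hG : ∀ t ∈ Set.uIcc (0:ℝ) 1,
          HasDerivAt (fun s : ℝ => (s:ℂ) * q ((s:ℂ) * z))
            (deriv q ((t:ℂ)*z) * t * z + q ((t:ℂ)*z)) t := by
        intro t ht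
        rw [Set.uIcc_of_le (by norm_num : (0:ℝ) ≤ 1)] at ht
        have hmem : (t:ℂ) * z ∈ unitDisk := mem_disk_mul hz ht.1 ht.2
        have hΦ : HasDerivAt (fun w : ℂ => w * q (w * z))
            (q ((t:ℂ)*z) + (t:ℂ) * (deriv q ((t:ℂ)*z) * z)) (t:ℂ) := by
          have hqd : HasDerivAt q (deriv q ((t:ℂ)*z)) ((t:ℂ)*z) :=
            ((hq.differentiableAt (hopen.mem_nhds hmem))).hasDerivAt
          have h1 : HasDerivAt (fun w : ℂ => w * z) z (t:ℂ) := by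
            simpa using (hasDerivAt_id ((t:ℂ))).mul_const z
          have h2 : HasDerivAt (fun w : ℂ => q (w * z)) (deriv q ((t:ℂ)*z) * z) (t:ℂ) :=
            hqd.comp ((t:ℂ)) h1
          have := (hasDerivAt_id ((t:ℂ))).fun_mul h2
          simpa [mul_comm, mul_assoc, mul_left_comm] using this
        have := hΦ.comp_ofReal
        convert this using 1
        ring
      have hint' : IntervalIntegrable
          (fun t : ℝ => deriv q ((t:ℂ)*z) * t * z + q ((t:ℂ)*z)) MeasureTheory.volume 0 1 := by
        apply ContinuousOn.intervalIntegrable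
        have hmaps : Set.MapsTo (fun t : ℝ => (t:ℂ) * z) (Set.uIcc (0:ℝ) 1) unitDisk := by
          intro t ht
          rw [Set.uIcc_of_le (by norm_num : (0:ℝ) ≤ 1)] at ht
          exact mem_disk_mul hz ht.1 ht.2
        have hcont : ContinuousOn (fun t : ℝ => (t:ℂ) * z) (Set.uIcc (0:ℝ) 1) :=
          (Complex.continuous_ofReal.mul continuous_const).continuousOn
        exact ((hq'.comp hcont hmaps).mul (Complex.continuous_ofReal.continuousOn)).mul
          continuousOn_const |>.add (hqc.comp hcont hmaps)
      have := intervalIntegral.integral_eq_sub_of_hasDerivAt hG hint'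
      simp only [Complex.ofReal_one, Complex.ofReal_zero, one_mul, zero_mul] at this
      rw [this]
      simp
    rw [hint] at hF
    exact hF
  · -- measurability in a nbhd
    filter_upwards [Metric.ball_mem_nhds z hε0] with x hx
    apply ContinuousOn.aestronglyMeasurable _ measurableSet_uIoc
    have hmaps : Set.MapsTo (fun t : ℝ => (t:ℂ) * x) (Set.uIoc (0:ℝ) 1) unitDisk :=
      fun t ht => hsub (htw t ht x hx)
    exact (hqc.comp (Complex.continuous_ofReal.mul continuous_const).continuousOn hmaps).mul
      continuousOn_const
  · -- integrability at z
    apply ContinuousOn.intervalIntegrable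
    have hmaps : Set.MapsTo (fun t : ℝ => (t:ℂ) * z) (Set.uIcc (0:ℝ) 1) unitDisk := by
      intro t ht
      rw [Set.uIcc_of_le (by norm_num : (0:ℝ) ≤ 1)] at ht
      exact mem_disk_mul hz ht.1 ht.2
    exact (hqc.comp (Complex.continuous_ofReal.mul continuous_const).continuousOn hmaps).mul
      continuousOn_const
  · -- measurability of F' z
    apply ContinuousOn.aestronglyMeasurable _ measurableSet_uIoc
    have hmaps : Set.MapsTo (fun t : ℝ => (t:ℂ) * z) (Set.uIoc (0:ℝ) 1) unitDisk :=
      fun t ht => hsub (htw t ht z (mem_ball_self hε0))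
    have hc : ContinuousOn (fun t : ℝ => (t:ℂ) * z) (Set.uIoc (0:ℝ) 1) :=
      (Complex.continuous_ofReal.mul continuous_const).continuousOn
    exact (((hq'.comp hc hmaps).mul Complex.continuous_ofReal.continuousOn).mul
      continuousOn_const).add (hqc.comp hc hmaps)
  · -- bound
    filter_upwards with t
    intro ht x hx
    have hcb := htw t ht x hx
    have hb1 := hC' _ hcb
    have hb2 := hC _ hcb
    have hb2' : (0:ℝ) ≤ C := le_trans (norm_nonneg _) hb2
    rw [Set.uIoc_of_le (by norm_num : (0:ℝ) ≤ 1)] at ht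
    have hxn : ‖x‖ ≤ r := hball x hx
    calc ‖deriv q ((t:ℂ)*x) * t * x + q ((t:ℂ)*x)‖
        ≤ ‖deriv q ((t:ℂ)*x) * t * x‖ + ‖q ((t:ℂ)*x)‖ := norm_add_le _ _
      _ ≤ C' + C := by
          have he : ‖deriv q ((t:ℂ)*x) * t * x‖ = ‖deriv q ((t:ℂ)*x)‖ * t * ‖x‖ := by
            rw [norm_mul, norm_mul, Complex.norm_real, Real.norm_of_nonneg (le_of_lt ht.1)]
          rw [he, mul_assoc]
          have h1 : t * ‖x‖ ≤ 1 := by nlinarith [ht.2, hxn, hr1, ht.1.le, norm_nonneg x]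
          have h2 : ‖deriv q ((t:ℂ)*x)‖ * (t * ‖x‖) ≤ C' * 1 :=
            mul_le_mul hb1 h1 (mul_nonneg ht.1.le (norm_nonneg x)) (le_trans (norm_nonneg _) hb1)
          linarith
  · exact intervalIntegrable_const
  · filter_upwards with t
    intro ht x hx
    exact hderiv t ht x hx

lemma logf_zero (f : ℂ → ℂ) : logf f 0 = 0 := by simp [logf]

lemma hasDerivAt_logf {f : ℂ → ℂ} (hf : AnalyticOnNhd ℂ f unitDisk)
    (hne : ∀ z ∈ unitDisk, f z ≠ 0) {z : ℂ} (hz : z ∈ unitDisk) :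
    HasDerivAt (logf f) (deriv f z / f z) z := by
  have hq : DifferentiableOn ℂ (fun w => deriv f w / f w) unitDisk :=
    (hf.deriv.differentiableOn).div hf.differentiableOn hne
  exact hasDerivAt_radialInt hq hz


lemma contOn_integrand {f : ℂ → ℂ} (hf : AnalyticOnNhd ℂ f unitDisk)
    (hne : ∀ z ∈ unitDisk, f z ≠ 0) {z : ℂ} (hz : z ∈ unitDisk) :
    ContinuousOn (fun t : ℝ => deriv f ((t:ℂ) * z) / f ((t:ℂ) * z) * z)
      (Set.uIcc (0:ℝ) 1) := by
  have hmaps : Set.MapsTo (fun t : ℝ => (t:ℂ) * z) (Set.uIcc (0:ℝ) 1) unitDisk := by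
    intro t ht
    rw [Set.uIcc_of_le (by norm_num : (0:ℝ) ≤ 1)] at ht
    exact mem_disk_mul hz ht.1 ht.2
  have hc : ContinuousOn (fun t : ℝ => (t:ℂ) * z) (Set.uIcc (0:ℝ) 1) :=
    (Complex.continuous_ofReal.mul continuous_const).continuousOn
  exact ((((hf.deriv).continuousOn.comp hc hmaps).div (hf.continuousOn.comp hc hmaps)
    (fun t ht => hne _ (hmaps ht))).mul continuousOn_const)



theorem stmt2 (μ lam z₀ : ℂ) (hμ : 0 < μ.re) (hlam : ‖lam‖ ≤ 1)
    (hz₀ : z₀ ∈ unitDisk) :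
    Convex ℝ (Vset μ lam z₀) := by
  intro x hx y hy a b ha hb hab
  obtain ⟨f, ⟨⟨hfA, hfne, hf0, hfP⟩, hfd⟩, hxe⟩ := hx
  obtain ⟨g, ⟨⟨hgA, hgne, hg0, hgP⟩, hgd⟩, hye⟩ := hy
  have hopen : IsOpen unitDisk := isOpen_ball
  have hμ0 : μ ≠ 0 := fun h => by simp [h] at hμ
  have hab' : (a:ℂ) + (b:ℂ) = 1 := by exact_mod_cast congrArg (Complex.ofReal ·) hab
  set u : ℂ → ℂ := fun w => a • logf f w + b • logf g w with hu
  set h : ℂ → ℂ := fun w => Complex.exp (u w) with hh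
  have hud : ∀ z ∈ unitDisk, HasDerivAt u
      (a • (deriv f z / f z) + b • (deriv g z / g z)) z := fun z hz =>
    ((hasDerivAt_logf hfA hfne hz).const_smul a).add
      ((hasDerivAt_logf hgA hgne hz).const_smul b)
  have hhd : ∀ z ∈ unitDisk, HasDerivAt h
      (Complex.exp (u z) * (a • (deriv f z / f z) + b • (deriv g z / g z))) z :=
    fun z hz => (hud z hz).cexp
  have hhne : ∀ z ∈ unitDisk, h z ≠ 0 := fun z _ => Complex.exp_ne_zero _
  have hu0 : u 0 = 0 := by simp [hu, logf_zero]
  have hh0 : h 0 = 1 := by simp [hh, hu0]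
  have hhA : AnalyticOnNhd ℂ h unitDisk :=
    DifferentiableOn.analyticOnNhd
      (fun z hz => ((hhd z hz).differentiableAt).differentiableWithinAt) hopen
  have hhderiv : ∀ z ∈ unitDisk, deriv h z
      = h z * (a • (deriv f z / f z) + b • (deriv g z / g z)) := fun z hz => (hhd z hz).deriv
  have h0mem : (0:ℂ) ∈ unitDisk := mem_ball_self one_pos
  have hder0 : deriv h 0 = μ / (Real.pi:ℂ) * (lam - 1) := by
    rw [hhderiv 0 h0mem, hh0, hf0, hg0, hfd, hgd]
    simp only [one_mul, div_one, Complex.real_smul, ← add_mul, hab']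
  have hP : ∀ z ∈ unitDisk, 0 < (Pfun μ h z).re := by
    intro z hz
    have hz1 : (1:ℂ) - z ≠ 0 := by
      intro hc
      have : z = 1 := by linear_combination -hc
      rw [this] at hz
      simp [unitDisk] at hz
    have hcomb : Pfun μ h z = (a:ℂ) * Pfun μ f z + (b:ℂ) * Pfun μ g z := by
      unfold Pfun
      rw [hhderiv z hz, Complex.real_smul, Complex.real_smul,
        mul_comm (h z), mul_div_assoc, mul_div_assoc,
        mul_div_cancel_right₀ _ (hhne z hz),
        show (b:ℂ) = 1 - (a:ℂ) by linear_combination hab']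
      field_simp [hμ0, hz1, hfne z hz, hgne z hz]
      ring
    rw [hcomb]
    simp only [Complex.add_re, Complex.re_ofReal_mul]
    rcases eq_or_lt_of_le ha with h0 | h0
    · rw [← h0] at hab ⊢
      simp only [zero_mul, zero_add] at *
      rw [hab] at *
      simpa using hgP z hz
    · have h1 : 0 < a * (Pfun μ f z).re := mul_pos h0 (hfP z hz)
      have h2 : 0 ≤ b * (Pfun μ g z).re := mul_nonneg hb (le_of_lt (hgP z hz))
      linarith
  have hcf := contOn_integrand hfA hfne hz₀
  have hcg := contOn_integrand hgA hgne hz₀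
  have hif : IntervalIntegrable (fun t : ℝ => deriv f ((t:ℂ) * z₀) / f ((t:ℂ) * z₀) * z₀)
      MeasureTheory.volume 0 1 := hcf.intervalIntegrable
  have hig : IntervalIntegrable (fun t : ℝ => deriv g ((t:ℂ) * z₀) / g ((t:ℂ) * z₀) * z₀)
      MeasureTheory.volume 0 1 := hcg.intervalIntegrable
  have hlog : logf h z₀ = a • logf f z₀ + b • logf g z₀ := by
    have hpt : Set.EqOn (fun t : ℝ => deriv h ((t:ℂ)*z₀) / h ((t:ℂ)*z₀) * z₀)
        (fun t : ℝ => a • (deriv f ((t:ℂ)*z₀) / f ((t:ℂ)*z₀) * z₀)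
          + b • (deriv g ((t:ℂ)*z₀) / g ((t:ℂ)*z₀) * z₀)) (Set.uIcc (0:ℝ) 1) := by
      intro t ht
      rw [Set.uIcc_of_le (by norm_num : (0:ℝ) ≤ 1)] at ht
      have hmem : (t:ℂ) * z₀ ∈ unitDisk := mem_disk_mul hz₀ ht.1 ht.2
      simp only
      rw [hhderiv _ hmem, mul_comm (h ((t:ℂ)*z₀)), mul_div_assoc,
        div_self (hhne _ hmem), mul_one]
      simp only [Complex.real_smul]
      ring
    have hadd := intervalIntegral.integral_add (hif.smul a) (hig.smul b)
    simp only [Pi.smul_apply, Pi.add_apply] at hadd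
    unfold logf
    rw [intervalIntegral.integral_congr hpt, hadd,
      intervalIntegral.integral_smul, intervalIntegral.integral_smul]
  refine ⟨h, ⟨⟨hhA, hhne, hh0, hP⟩, hder0⟩, ?_⟩
  rw [hxe, hye, hlog]
end

section
/- Let μ ∈ ℂ with Re μ > 0, let λ lie in the closed unit disk, and let z₀ ∈ D. If |λ| = 1 or z₀ = 0, then V(z₀, λ) is the singleton {(μ/π)·log((1 − z₀)/(1 − λ z₀))}, where log denotes the principal branch. -/
open Complex Set Metric

section Stmt3Aux

noncomputable def gfun (μ lam z : ℂ) : ℂ :=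
  μ / (Real.pi : ℂ) * (Complex.log (1 - z) - Complex.log (1 - lam * z))

noncomputable def qfun (μ lam z : ℂ) : ℂ :=
  μ / (Real.pi : ℂ) * ((lam - 1) / ((1 - z) * (1 - lam * z)))

lemma pi_ne : (Real.pi : ℂ) ≠ 0 := by
  exact_mod_cast Real.pi_ne_zero

lemma one_sub_re_pos {w : ℂ} (h : ‖w‖ < 1) : 0 < (1 - w).re := by
  have := Complex.re_le_norm w
  simp only [Complex.sub_re, Complex.one_re]
  linarith

lemma one_sub_ne {w : ℂ} (h : ‖w‖ < 1) : (1 : ℂ) - w ≠ 0 := by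
  intro hw
  have : (1 - w).re = 0 := by rw [hw]; simp
  linarith [one_sub_re_pos h]

lemma abs_mul_lt {lam z : ℂ} (hlam : ‖lam‖ ≤ 1) (hz : ‖z‖ < 1) :
    ‖lam * z‖ < 1 := by
  rw [norm_mul]
  calc ‖lam‖ * ‖z‖ ≤ 1 * ‖z‖ := by
        apply mul_le_mul_of_nonneg_right hlam (norm_nonneg z)
    _ < 1 := by simpa using hz

lemma hasDerivAt_gfun {μ lam z : ℂ} (hlam : ‖lam‖ ≤ 1) (hz : ‖z‖ < 1) :
    HasDerivAt (gfun μ lam) (qfun μ lam z) z := by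
  have hs1 : (1 - z) ∈ Complex.slitPlane := Or.inl (one_sub_re_pos hz)
  have hs2 : (1 - lam * z) ∈ Complex.slitPlane := Or.inl (one_sub_re_pos (abs_mul_lt hlam hz))
  have h1 : HasDerivAt (fun w : ℂ => Complex.log (1 - w)) ((1 - z)⁻¹ * (-1)) z :=
    (Complex.hasDerivAt_log hs1).comp z ((hasDerivAt_id z).const_sub 1)
  have hin : HasDerivAt (fun w : ℂ => 1 - lam * w) (-lam) z := by
    simpa using ((hasDerivAt_id z).const_mul lam).const_sub 1
  have h2 : HasDerivAt (fun w : ℂ => Complex.log (1 - lam * w)) ((1 - lam * z)⁻¹ * (-lam)) z :=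
    by have h := (Complex.hasDerivAt_log hs2).comp z hin; exact h
  have h3 := (h1.sub h2).const_mul (μ / (Real.pi : ℂ))
  refine h3.congr_deriv ?_
  have e1 : (1 : ℂ) - z ≠ 0 := one_sub_ne hz
  have e2 : (1 : ℂ) - lam * z ≠ 0 := one_sub_ne (abs_mul_lt hlam hz)
  rw [qfun]
  field_simp [show (1:ℂ) - z * lam ≠ 0 by rwa [mul_comm]]
  ring

lemma cayley_re_pos {w : ℂ} (h : ‖w‖ < 1) : 0 < ((1 + w) / (1 - w)).re := by
  have h0 : (1 : ℂ) - w ≠ 0 := one_sub_ne h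
  have hns : 0 < Complex.normSq (1 - w) := Complex.normSq_pos.2 h0
  have habs : w.re ^ 2 + w.im ^ 2 < 1 := by
    have := Complex.sq_norm w
    rw [Complex.normSq_apply] at this
    nlinarith [norm_nonneg w]
  rw [Complex.div_re]
  have hre : (1 + w).re * (1 - w).re / Complex.normSq (1 - w)
      + (1 + w).im * (1 - w).im / Complex.normSq (1 - w)
      = (1 - (w.re ^ 2 + w.im ^ 2)) / Complex.normSq (1 - w) := by
    simp only [Complex.add_re, Complex.sub_re, Complex.one_re, Complex.add_im,
      Complex.sub_im, Complex.one_im]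
    ring
  rw [hre]
  exact div_pos (by linarith) hns

lemma inv_cayley_lt {w : ℂ} (h : 0 < w.re) : ‖(w - 1) / (w + 1)‖ < 1 := by
  have h1 : w + 1 ≠ 0 := by
    intro hw
    have : (w + 1).re = 0 := by rw [hw]; simp
    simp only [Complex.add_re, Complex.one_re] at this
    linarith
  rw [norm_div, div_lt_one ((norm_pos_iff.2 h1))]
  have e1 : ‖w - 1‖ ^ 2 = (w.re - 1) ^ 2 + w.im ^ 2 := by
    rw [Complex.sq_norm, Complex.normSq_apply]; simp; ring
  have e2 : ‖w + 1‖ ^ 2 = (w.re + 1) ^ 2 + w.im ^ 2 := by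
    rw [Complex.sq_norm, Complex.normSq_apply]; simp; ring
  nlinarith [norm_nonneg (w - 1), norm_nonneg (w + 1)]

lemma log_div_eq {a b : ℂ} (ha : 0 < a.re) (hb : 0 < b.re) :
    Complex.log (a / b) = Complex.log a - Complex.log b := by
  have ha0 : a ≠ 0 := fun h => by simp [h] at ha
  have hb0 : b ≠ 0 := fun h => by simp [h] at hb
  have hexp : Complex.exp (Complex.log a - Complex.log b) = a / b := by
    rw [Complex.exp_sub, Complex.exp_log ha0, Complex.exp_log hb0]
  have hima : |a.arg| < Real.pi / 2 := Complex.abs_arg_lt_pi_div_two_iff.2 (Or.inl ha)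
  have himb : |b.arg| < Real.pi / 2 := Complex.abs_arg_lt_pi_div_two_iff.2 (Or.inl hb)
  rw [← hexp, Complex.log_exp]
  · simp only [Complex.sub_im, Complex.log_im]
    rw [abs_lt] at hima himb
    linarith
  · simp only [Complex.sub_im, Complex.log_im]
    rw [abs_lt] at hima himb
    linarith

lemma abs_coe_mul_lt {z₀ : ℂ} (hz : ‖z₀‖ < 1) {t : ℝ} (h0 : 0 ≤ t) (h1 : t ≤ 1) :
    ‖(t : ℂ) * z₀‖ < 1 := by
  rw [norm_mul, Complex.norm_real, Real.norm_eq_abs, _root_.abs_of_nonneg h0]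
  calc t * ‖z₀‖ ≤ 1 * ‖z₀‖ :=
        mul_le_mul_of_nonneg_right h1 (norm_nonneg z₀)
    _ < 1 := by simpa using hz

lemma contOn_q (μ lam z₀ : ℂ) (hlam : ‖lam‖ ≤ 1) (hz : ‖z₀‖ < 1) :
    ContinuousOn (fun t : ℝ => qfun μ lam ((t : ℂ) * z₀) * z₀) (Set.uIcc (0:ℝ) 1) := by
  simp only [qfun]
  apply ContinuousOn.mul _ continuousOn_const
  apply ContinuousOn.mul continuousOn_const
  apply ContinuousOn.div continuousOn_const
  · fun_prop
  · intro t ht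
    rw [Set.uIcc_of_le (zero_le_one' ℝ)] at ht
    have habs := abs_coe_mul_lt hz ht.1 ht.2
    exact mul_ne_zero (one_sub_ne habs) (one_sub_ne (abs_mul_lt hlam habs))

lemma ftc (μ lam z₀ : ℂ) (hlam : ‖lam‖ ≤ 1) (hz : ‖z₀‖ < 1) :
    (∫ t in (0:ℝ)..1, qfun μ lam ((t : ℂ) * z₀) * z₀) = gfun μ lam z₀ := by
  have key : ∀ t ∈ Set.uIcc (0:ℝ) 1,
      HasDerivAt (fun t : ℝ => gfun μ lam ((t : ℂ) * z₀)) (qfun μ lam ((t : ℂ) * z₀) * z₀) t := by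
    intro t ht
    rw [Set.uIcc_of_le (zero_le_one' ℝ)] at ht
    have habs := abs_coe_mul_lt hz ht.1 ht.2
    have h1 : HasDerivAt (fun w : ℂ => gfun μ lam (w * z₀)) (qfun μ lam ((t : ℂ) * z₀) * z₀)
        (t : ℂ) := by
      have := (hasDerivAt_gfun hlam habs (μ := μ)).comp (t : ℂ)
        ((hasDerivAt_id (t : ℂ)).mul_const z₀)
      simp at this; exact this
    exact h1.comp_ofReal
  have hint : IntervalIntegrable (fun t : ℝ => qfun μ lam ((t : ℂ) * z₀) * z₀)
      MeasureTheory.volume 0 1 :=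
    (contOn_q μ lam z₀ hlam hz).intervalIntegrable
  rw [intervalIntegral.integral_eq_sub_of_hasDerivAt key hint]
  norm_num [gfun]

noncomputable def f0 (μ lam z : ℂ) : ℂ := Complex.exp (gfun μ lam z)

lemma hasDerivAt_f0 {μ lam z : ℂ} (hlam : ‖lam‖ ≤ 1) (hz : ‖z‖ < 1) :
    HasDerivAt (f0 μ lam) (f0 μ lam z * qfun μ lam z) z :=
  (hasDerivAt_gfun hlam hz).cexp

lemma deriv_f0 {μ lam z : ℂ} (hlam : ‖lam‖ ≤ 1) (hz : ‖z‖ < 1) :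
    deriv (f0 μ lam) z = f0 μ lam z * qfun μ lam z :=
  (hasDerivAt_f0 hlam hz).deriv

lemma mem_unitDisk {z : ℂ} : z ∈ unitDisk ↔ ‖z‖ < 1 := by
  simp [unitDisk, mem_ball_zero_iff]

lemma f0_ne (μ lam z : ℂ) : f0 μ lam z ≠ 0 := Complex.exp_ne_zero _

lemma gfun_zero (μ lam : ℂ) : gfun μ lam 0 = 0 := by simp [gfun]

lemma qfun_zero (μ lam : ℂ) : qfun μ lam 0 = μ / (Real.pi : ℂ) * (lam - 1) := by simp [qfun]

lemma memFlam_f0 {μ lam : ℂ} (hμ : 0 < μ.re) (hlam : ‖lam‖ ≤ 1) :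
    memFlam μ lam (f0 μ lam) := by
  have hμ0 : μ ≠ 0 := fun h => by simp [h] at hμ
  refine ⟨⟨?_, fun z _ => f0_ne μ lam z, ?_, ?_⟩, ?_⟩
  · apply DifferentiableOn.analyticOnNhd _ isOpen_ball
    intro z hz
    exact (hasDerivAt_f0 hlam (mem_unitDisk.1 hz)).differentiableAt.differentiableWithinAt
  · simp [f0, gfun_zero]
  · intro z hz
    rw [mem_unitDisk] at hz
    have h1 : (1 : ℂ) - z ≠ 0 := one_sub_ne hz
    have h2 : (1 : ℂ) - lam * z ≠ 0 := one_sub_ne (abs_mul_lt hlam hz)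
    have hP : Pfun μ (f0 μ lam) z = (1 + lam * z) / (1 - lam * z) := by
      rw [Pfun, deriv_f0 hlam hz]
      have hzq : z * (f0 μ lam z * qfun μ lam z) / f0 μ lam z = z * qfun μ lam z := by
        rw [mul_comm (f0 μ lam z) (qfun μ lam z), ← mul_assoc, mul_div_assoc,
          div_self (f0_ne μ lam z), mul_one]
      rw [hzq, qfun]
      rw [show 2 * (Real.pi : ℂ) / μ * (z * (μ / (Real.pi : ℂ) * ((lam - 1) / ((1 - z) * (1 - lam * z)))))
          = (2 * (Real.pi : ℂ) / μ * (μ / (Real.pi : ℂ))) * (z * ((lam - 1) / ((1 - z) * (1 - lam * z)))) from by ring]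
      rw [show 2 * (Real.pi : ℂ) / μ * (μ / (Real.pi : ℂ)) = 2 from by
        field_simp [pi_ne, hμ0]]
      field_simp [h1, h2, show (1:ℂ) - z * lam ≠ 0 by rwa [mul_comm]]
      ring
    rw [hP]
    exact cayley_re_pos (abs_mul_lt hlam hz)
  · rw [deriv_f0 hlam (by simp), qfun_zero]
    simp [f0, gfun_zero]

lemma logf_f0 {μ lam z₀ : ℂ} (hlam : ‖lam‖ ≤ 1) (hz : ‖z₀‖ < 1) :
    logf (f0 μ lam) z₀ = gfun μ lam z₀ := by
  rw [logf, ← ftc μ lam z₀ hlam hz]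
  apply intervalIntegral.integral_congr
  intro t ht
  rw [Set.uIcc_of_le (zero_le_one' ℝ)] at ht
  have habs := abs_coe_mul_lt hz ht.1 ht.2
  show deriv (f0 μ lam) ((t:ℂ)*z₀) / f0 μ lam ((t:ℂ)*z₀) * z₀ = qfun μ lam ((t:ℂ)*z₀) * z₀
  rw [deriv_f0 hlam habs, mul_comm (f0 μ lam _), mul_div_assoc,
    div_self (f0_ne μ lam _), mul_one]

lemma gfun_eq {μ lam z₀ : ℂ} (hlam : ‖lam‖ ≤ 1) (hz : ‖z₀‖ < 1) :
    gfun μ lam z₀ = μ / (Real.pi : ℂ) * Complex.log ((1 - z₀) / (1 - lam * z₀)) := by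
  rw [gfun, log_div_eq (one_sub_re_pos hz) (one_sub_re_pos (abs_mul_lt hlam hz))]

lemma hard_key {μ lam : ℂ} (hμ : 0 < μ.re) (hlam1 : ‖lam‖ = 1) {f : ℂ → ℂ}
    (hf : memFlam μ lam f) {z : ℂ} (hz : ‖z‖ < 1) (hz0 : z ≠ 0) :
    deriv f z / f z = qfun μ lam z := by
  obtain ⟨⟨hA, hne, hf0, hP⟩, hd0⟩ := hf
  have hμ0 : μ ≠ 0 := fun h => by simp [h] at hμ
  have hlam : ‖lam‖ ≤ 1 := le_of_eq hlam1
  have hA' : AnalyticOnNhd ℂ (deriv f) unitDisk := hA.deriv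
  set p : ℂ → ℂ := Pfun μ f with hp
  have hpdiff : ∀ w ∈ unitDisk, DifferentiableAt ℂ p w := by
    intro w hw
    have hfw : DifferentiableAt ℂ f w := (hA w hw).differentiableAt
    have hdw : DifferentiableAt ℂ (deriv f) w := (hA' w hw).differentiableAt
    have h1w : (1 : ℂ) - w ≠ 0 := one_sub_ne (mem_unitDisk.1 hw)
    exact ((differentiableAt_const _).mul
        ((differentiableAt_id.mul hdw).div hfw (hne w hw))).add
      (((differentiableAt_const _).add differentiableAt_id).div
        ((differentiableAt_const _).sub differentiableAt_id) h1w)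
  have h0mem : (0 : ℂ) ∈ unitDisk := by simp [unitDisk]
  have hp0 : p 0 = 1 := by simp [hp, Pfun]
  have hdp0 : HasDerivAt p (2 * lam) 0 := by
    have hdd : HasDerivAt (deriv f) (deriv (deriv f) 0) 0 :=
      ((hA' 0 h0mem).differentiableAt).hasDerivAt
    have hdf : HasDerivAt f (deriv f 0) 0 := ((hA 0 h0mem).differentiableAt).hasDerivAt
    have hmul : HasDerivAt (fun w : ℂ => w * deriv f w)
        (1 * deriv f 0 + 0 * deriv (deriv f) 0) 0 := (hasDerivAt_id 0).mul hdd
    have hdiv : HasDerivAt (fun w : ℂ => w * deriv f w / f w)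
        (((1 * deriv f 0 + 0 * deriv (deriv f) 0) * f 0 - 0 * deriv f 0 * deriv f 0) / f 0 ^ 2)
        0 := by
      have := hmul.div hdf (by rw [hf0]; exact one_ne_zero)
      exact this
    have hcay : HasDerivAt (fun w : ℂ => (1 + w) / (1 - w))
        ((1 * (1 - 0) - (1 + 0) * (-1)) / (1 - 0) ^ 2) 0 := by
      exact (((hasDerivAt_id (0:ℂ)).const_add 1).div ((hasDerivAt_id (0:ℂ)).const_sub 1)
        (by norm_num))
    have htot := ((hdiv.const_mul (2 * (Real.pi : ℂ) / μ)).add hcay)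
    have : p = fun w => 2 * (Real.pi : ℂ) / μ * (w * deriv f w / f w) + (1 + w) / (1 - w) := rfl
    rw [this]
    refine htot.congr_deriv ?_
    rw [hf0, hd0]
    field_simp [pi_ne, hμ0]
    ring
  set ω : ℂ → ℂ := fun w => (p w - 1) / (p w + 1) with hω
  have hpne : ∀ w ∈ unitDisk, p w + 1 ≠ 0 := by
    intro w hw hc
    have h1 := hP w hw
    have h2 : (p w + 1).re = 0 := by rw [hc]; simp
    simp only [Complex.add_re, Complex.one_re] at h2
    linarith
  have hωdiff : DifferentiableOn ℂ ω (Metric.ball (0:ℂ) 1) := by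
    intro w hw
    have hw' : w ∈ unitDisk := hw
    exact (((hpdiff w hw').sub (differentiableAt_const _)).div
      ((hpdiff w hw').add (differentiableAt_const _)) (hpne w hw')).differentiableWithinAt
  have hω0 : ω 0 = 0 := by simp [hω, hp0]
  have hmaps : Set.MapsTo ω (Metric.ball (0:ℂ) 1) (Metric.ball (ω 0) 1) := by
    intro w hw
    rw [hω0, mem_ball_zero_iff]
    exact inv_cayley_lt (hP w hw)
  have hderω : HasDerivAt ω lam 0 := by
    have := (hdp0.sub_const 1).div (hdp0.add_const 1) (by rw [hp0]; norm_num)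
    refine this.congr_deriv ?_
    rw [hp0]
    ring
  have hdsl : ‖dslope ω 0 0‖ = 1 / 1 := by
    rw [dslope_same, hderω.deriv, hlam1]
    norm_num
  have heq := Complex.affine_of_mapsTo_ball_of_exists_norm_dslope_eq_div hωdiff (hmaps.mono_right Metric.ball_subset_closedBall)
    (Metric.mem_ball_self one_pos) hdsl
  have hzball : z ∈ Metric.ball (0:ℂ) 1 := by
    rwa [mem_ball_zero_iff]
  have hωz : ω z = lam * z := by
    have h := heq hzball
    simp only [hω0, sub_zero, zero_add, dslope_same, hderω.deriv, smul_eq_mul] at h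
    rw [h]
    ring
  have hzmem : z ∈ unitDisk := mem_unitDisk.2 hz
  have h1z : (1 : ℂ) - z ≠ 0 := one_sub_ne hz
  have h2z : (1 : ℂ) - lam * z ≠ 0 := one_sub_ne (abs_mul_lt hlam hz)
  have e1 : p z - 1 = lam * z * (p z + 1) := by
    have h := hωz
    rw [hω] at h
    exact (div_eq_iff (hpne z hzmem)).mp h
  have e3 : 2 * (Real.pi : ℂ) / μ * (z * (deriv f z / f z)) + (1 + z) / (1 - z)
      = (1 + lam * z) / (1 - lam * z) := by
    have : p z = (1 + lam * z) / (1 - lam * z) := by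
      rw [eq_div_iff h2z]
      linear_combination e1
    rw [hp, Pfun] at this
    linear_combination this
  have key : (1 + lam * z) / (1 - lam * z) - (1 + z) / (1 - z)
      = 2 * z * (lam - 1) / ((1 - z) * (1 - lam * z)) := by
    rw [div_sub_div _ _ h2z h1z, div_eq_div_iff (mul_ne_zero h2z h1z) (mul_ne_zero h1z h2z)]
    ring
  have e4 : 2 * (Real.pi : ℂ) / μ * (z * (deriv f z / f z))
      = 2 * z * (lam - 1) / ((1 - z) * (1 - lam * z)) := by
    linear_combination e3 + key
  have hfac : 2 * (Real.pi : ℂ) / μ * z ≠ 0 :=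
    mul_ne_zero (div_ne_zero (mul_ne_zero two_ne_zero pi_ne) hμ0) hz0
  apply mul_left_cancel₀ hfac
  rw [mul_assoc, e4, qfun]
  rw [show 2 * (Real.pi : ℂ) / μ * z * (μ / (Real.pi : ℂ) * ((lam - 1) / ((1 - z) * (1 - lam * z))))
      = (2 * (Real.pi : ℂ) / μ * (μ / (Real.pi : ℂ))) * (z * ((lam - 1) / ((1 - z) * (1 - lam * z)))) from by ring]
  rw [show 2 * (Real.pi : ℂ) / μ * (μ / (Real.pi : ℂ)) = 2 from by field_simp [pi_ne, hμ0]]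
  ring

lemma logf_hard {μ lam z₀ : ℂ} (hμ : 0 < μ.re) (hlam1 : ‖lam‖ = 1) {f : ℂ → ℂ}
    (hf : memFlam μ lam f) (hz : ‖z₀‖ < 1) (hz0 : z₀ ≠ 0) :
    logf f z₀ = gfun μ lam z₀ := by
  rw [logf, ← ftc μ lam z₀ (le_of_eq hlam1) hz]
  apply intervalIntegral.integral_congr_ae
  apply Filter.Eventually.of_forall
  intro t ht
  rw [Set.uIoc_of_le (zero_le_one' ℝ)] at ht
  have habs := abs_coe_mul_lt hz ht.1.le ht.2
  have htz0 : (t : ℂ) * z₀ ≠ 0 :=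
    mul_ne_zero (by exact_mod_cast ne_of_gt ht.1) hz0
  show deriv f ((t:ℂ)*z₀) / f ((t:ℂ)*z₀) * z₀ = qfun μ lam ((t:ℂ)*z₀) * z₀
  rw [hard_key hμ hlam1 hf habs htz0]

end Stmt3Aux

theorem stmt3 (μ lam z₀ : ℂ) (hμ : 0 < μ.re) (hlam : ‖lam‖ ≤ 1)
    (hz₀ : z₀ ∈ unitDisk) (h : ‖lam‖ = 1 ∨ z₀ = 0) :
    Vset μ lam z₀ = {μ / (Real.pi : ℂ) * Complex.log ((1 - z₀) / (1 - lam * z₀))} := by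
  have hz : ‖z₀‖ < 1 := mem_unitDisk.1 hz₀
  ext w
  simp only [Vset, Set.mem_setOf_eq, Set.mem_singleton_iff]
  constructor
  · rintro ⟨f, hf, rfl⟩
    by_cases hzz : z₀ = 0
    · subst hzz
      rw [logf_zero]
      simp
    · have hl : ‖lam‖ = 1 := h.resolve_right hzz
      rw [logf_hard hμ hl hf hz hzz, gfun_eq (le_of_eq hl) hz]
  · rintro rfl
    exact ⟨f0 μ lam, memFlam_f0 hμ hlam,
      (by rw [logf_f0 hlam hz, gfun_eq hlam hz] :
        logf (f0 μ lam) z₀ = μ / (Real.pi : ℂ) * Complex.log ((1 - z₀) / (1 - lam * z₀))).symm⟩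
end

section
/- Let μ ∈ ℂ with Re μ > 0. If |λ| < 1 and z₀ ∈ D \ {0}, then the point (μ/π)·log((1 − z₀)/(1 − λ z₀)) (principal branch) is an interior point of the set V(z₀, λ). -/
open Complex Set Metric

noncomputable section Stmt4AuxSec

namespace Stmt4Aux

def hA (μ lam u z : ℂ) : ℂ :=
  μ / (Real.pi : ℂ) * (Complex.log (1 - z) - Complex.log (1 - lam * z)) + u * z ^ 2

def hA' (μ lam u z : ℂ) : ℂ :=
  μ / (Real.pi : ℂ) * (-(1 - z)⁻¹ + lam * (1 - lam * z)⁻¹) + 2 * u * z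

def fA (μ lam u : ℂ) : ℂ → ℂ := fun z => Complex.exp (hA μ lam u z)

lemma abs_of_mem {z : ℂ} (h : z ∈ unitDisk) : ‖z‖ < 1 := by
  simpa [unitDisk, Metric.mem_ball, Complex.dist_eq] using h

lemma re_pos_one_sub {w : ℂ} (hw : ‖w‖ < 1) : 0 < (1 - w).re := by
  have h := Complex.re_le_norm w
  simp only [Complex.sub_re, Complex.one_re]
  linarith

lemma ne_one_sub {w : ℂ} (hw : ‖w‖ < 1) : (1 - w) ≠ 0 := by
  intro h
  have := re_pos_one_sub hw
  rw [h] at this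
  simp at this

lemma slit_one_sub {w : ℂ} (hw : ‖w‖ < 1) : (1 - w) ∈ Complex.slitPlane :=
  Complex.mem_slitPlane_iff.2 (Or.inl (re_pos_one_sub hw))

lemma abs_mul_lt {lam z : ℂ} (h1 : ‖lam‖ < 1) (h2 : ‖z‖ < 1) :
    ‖(lam * z)‖ < 1 := by
  rw [norm_mul]
  nlinarith [norm_nonneg lam, norm_nonneg z]

lemma hasDerivAt_hA (μ lam u : ℂ) (hlam : ‖lam‖ < 1) {z : ℂ}
    (hz : ‖z‖ < 1) : HasDerivAt (hA μ lam u) (hA' μ lam u z) z := by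
  have h1 : HasDerivAt (fun z : ℂ => 1 - z) (-1) z := by
    simpa using (hasDerivAt_id z).const_sub (1 : ℂ)
  have h2 : HasDerivAt (fun z : ℂ => 1 - lam * z) (-lam) z := by
    simpa using ((hasDerivAt_id z).const_mul lam).const_sub (1 : ℂ)
  have hl1 : HasDerivAt (fun z : ℂ => Complex.log (1 - z)) ((1 - z)⁻¹ * -1) z :=
    (Complex.hasDerivAt_log (slit_one_sub hz)).comp z h1
  have hl2 : HasDerivAt (fun z : ℂ => Complex.log (1 - lam * z))
      ((1 - lam * z)⁻¹ * -lam) z := by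
    have h := (Complex.hasDerivAt_log (slit_one_sub (abs_mul_lt hlam hz))).comp z h2
    exact h
  have h3 := ((hl1.sub hl2).const_mul (μ / (Real.pi : ℂ))).add
    ((hasDerivAt_pow 2 z).const_mul u)
  refine HasDerivAt.congr_deriv h3 ?_
  unfold hA'
  push_cast
  ring

lemma hasDerivAt_fA (μ lam u : ℂ) (hlam : ‖lam‖ < 1) {z : ℂ}
    (hz : ‖z‖ < 1) :
    HasDerivAt (fA μ lam u) (hA' μ lam u z * fA μ lam u z) z := by
  have h := (hasDerivAt_hA μ lam u hlam hz).cexp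
  rw [mul_comm] at h
  exact h

lemma deriv_fA (μ lam u : ℂ) (hlam : ‖lam‖ < 1) {z : ℂ}
    (hz : ‖z‖ < 1) :
    deriv (fA μ lam u) z = hA' μ lam u z * fA μ lam u z :=
  (hasDerivAt_fA μ lam u hlam hz).deriv

lemma hA_zero (μ lam u : ℂ) : hA μ lam u 0 = 0 := by
  simp [hA]

lemma fA_zero (μ lam u : ℂ) : fA μ lam u 0 = 1 := by
  simp [fA, hA_zero]

lemma log_div_aux {a b : ℂ} (ha : 0 < a.re) (hb : 0 < b.re) :
    Complex.log (a / b) = Complex.log a - Complex.log b := by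
  have ha0 : a ≠ 0 := fun h => by simp [h] at ha
  have hb0 : b ≠ 0 := fun h => by simp [h] at hb
  have h1 := abs_lt.mp (Complex.abs_arg_lt_pi_div_two_iff.2 (Or.inl ha))
  have h2 := abs_lt.mp (Complex.abs_arg_lt_pi_div_two_iff.2 (Or.inl hb))
  have he : Complex.exp (Complex.log a - Complex.log b) = a / b := by
    rw [Complex.exp_sub, Complex.exp_log ha0, Complex.exp_log hb0]
  have him : (Complex.log a - Complex.log b).im = a.arg - b.arg := by
    simp [Complex.sub_im, Complex.log_im]
  rw [← he, Complex.log_exp (by rw [him]; linarith [Real.pi_pos])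
    (by rw [him]; linarith [Real.pi_pos])]

lemma abs_t_mul {z₀ : ℂ} (hz₀ : ‖z₀‖ < 1) {t : ℝ}
    (ht : t ∈ Set.uIcc (0:ℝ) 1) : ‖((t:ℂ) * z₀)‖ < 1 := by
  rw [Set.uIcc_of_le zero_le_one] at ht
  rw [norm_mul, Complex.norm_real, Real.norm_eq_abs, _root_.abs_of_nonneg ht.1]
  nlinarith [ht.2, norm_nonneg z₀]

lemma logf_fA (μ lam u : ℂ) (hlam : ‖lam‖ < 1) {z₀ : ℂ}
    (hz₀ : ‖z₀‖ < 1) : logf (fA μ lam u) z₀ = hA μ lam u z₀ := by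
  have key : ∀ t ∈ Set.uIcc (0:ℝ) 1,
      HasDerivAt (fun s : ℝ => hA μ lam u ((s:ℂ) * z₀)) (hA' μ lam u ((t:ℂ) * z₀) * z₀) t := by
    intro t ht
    have hH : HasDerivAt (fun w : ℂ => hA μ lam u (w * z₀))
        (hA' μ lam u ((t:ℂ) * z₀) * z₀) (t:ℂ) := by
      have h := (hasDerivAt_hA μ lam u hlam (abs_t_mul hz₀ ht)).comp (t:ℂ)
        ((hasDerivAt_id (t:ℂ)).mul_const z₀)
      simp only [one_mul] at h
      exact h
    exact hH.comp_ofReal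
  have hcont : ContinuousOn (fun t : ℝ => hA' μ lam u ((t:ℂ) * z₀) * z₀)
      (Set.uIcc (0:ℝ) 1) := by
    have hc : ContinuousOn (fun t : ℝ => (t:ℂ) * z₀) (Set.uIcc (0:ℝ) 1) :=
      (Complex.continuous_ofReal.continuousOn.mul continuousOn_const)
    apply ContinuousOn.mul _ continuousOn_const
    unfold hA'
    apply ContinuousOn.add
    · apply ContinuousOn.mul continuousOn_const
      apply ContinuousOn.add
      · exact ((continuousOn_const.sub hc).inv₀
          (fun t ht => ne_one_sub (abs_t_mul hz₀ ht))).neg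
      · apply ContinuousOn.mul continuousOn_const
        exact (continuousOn_const.sub (continuousOn_const.mul hc)).inv₀
          (fun t ht => ne_one_sub (abs_mul_lt hlam (abs_t_mul hz₀ ht)))
    · exact continuousOn_const.mul hc
  have hint : IntervalIntegrable (fun t : ℝ => hA' μ lam u ((t:ℂ) * z₀) * z₀)
      MeasureTheory.volume 0 1 := hcont.intervalIntegrable
  have hcong : logf (fA μ lam u) z₀
      = ∫ t in (0:ℝ)..1, hA' μ lam u ((t:ℂ) * z₀) * z₀ := by
    unfold logf
    apply intervalIntegral.integral_congr
    intro t ht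
    have hfne : fA μ lam u ((t:ℂ) * z₀) ≠ 0 := Complex.exp_ne_zero _
    show deriv (fA μ lam u) ((t:ℂ) * z₀) / fA μ lam u ((t:ℂ) * z₀) * z₀
        = hA' μ lam u ((t:ℂ) * z₀) * z₀
    rw [deriv_fA μ lam u hlam (abs_t_mul hz₀ ht), mul_div_assoc,
      div_self hfne, mul_one]
  rw [hcong, intervalIntegral.integral_eq_sub_of_hasDerivAt key hint]
  norm_num [hA_zero]

lemma Pfun_eq (μ lam u : ℂ) (hμ : μ ≠ 0) (hlam : ‖lam‖ < 1) {z : ℂ}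
    (hz : ‖z‖ < 1) :
    Pfun μ (fA μ lam u) z
      = (1 + lam * z) / (1 - lam * z) + 4 * (Real.pi : ℂ) / μ * u * z ^ 2 := by
  have h1 : (1 - z) ≠ 0 := ne_one_sub hz
  have h2 : (1 - lam * z) ≠ 0 := ne_one_sub (abs_mul_lt hlam hz)
  have hfne : fA μ lam u z ≠ 0 := Complex.exp_ne_zero _
  have hπ : (Real.pi : ℂ) ≠ 0 := Complex.ofReal_ne_zero.2 Real.pi_ne_zero
  rw [Pfun, deriv_fA μ lam u hlam hz]
  have hcan : z * (hA' μ lam u z * fA μ lam u z) / fA μ lam u z = z * hA' μ lam u z := by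
    field_simp
  rw [hcan, hA']
  have e1 : 2 * (Real.pi:ℂ) / μ * (z * (μ / (Real.pi:ℂ) * (-(1 - z)⁻¹ + lam * (1 - lam * z)⁻¹) + 2 * u * z))
      = 2 * z * (-(1 - z)⁻¹ + lam * (1 - lam * z)⁻¹) + 4 * (Real.pi:ℂ) / μ * u * z ^ 2 := by
    field_simp
    ring
  rw [e1]
  have e2 : 2 * z * (-(1 - z)⁻¹ + lam * (1 - lam * z)⁻¹) + (1 + z) / (1 - z)
      = (1 + lam * z) / (1 - lam * z) := by
    have h2' : 1 - z * lam ≠ 0 := by rwa [mul_comm]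
    field_simp
    ring
  linear_combination e2

lemma re_cayley {lam z : ℂ} (hlam : ‖lam‖ < 1) (hz : ‖z‖ < 1) :
    (1 - ‖lam‖ ^ 2) / (1 + ‖lam‖) ^ 2
      ≤ ((1 + lam * z) / (1 - lam * z)).re := by
  set w := lam * z with hw
  have hwa : ‖w‖ ≤ ‖lam‖ := by
    rw [hw, norm_mul]
    nlinarith [norm_nonneg lam, norm_nonneg z, hz]
  have hwlt : ‖w‖ < 1 := lt_of_le_of_lt hwa hlam
  have hne : (1 - w) ≠ 0 := ne_one_sub hwlt
  have hre : ((1 + w) / (1 - w)).re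
      = (1 - Complex.normSq w) / Complex.normSq (1 - w) := by
    rw [Complex.div_re, ← add_div]
    congr 1
    simp [Complex.normSq_apply]
    ring
  rw [hre]
  have hd0 : 0 < Complex.normSq (1 - w) := Complex.normSq_pos.2 hne
  have hnum : 1 - ‖lam‖ ^ 2 ≤ 1 - Complex.normSq w := by
    rw [← Complex.sq_norm]
    nlinarith [norm_nonneg w]
  have hden : Complex.normSq (1 - w) ≤ (1 + ‖lam‖) ^ 2 := by
    rw [← Complex.sq_norm]
    have habs : ‖(1 - w)‖ ≤ 1 + ‖lam‖ := by
      calc ‖(1 - w)‖ ≤ ‖(1:ℂ)‖ + ‖w‖ := by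
            simpa [sub_eq_add_neg] using norm_add_le 1 (-w)
        _ ≤ 1 + ‖lam‖ := by simp [hwa]
    nlinarith [norm_nonneg (1 - w)]
  have hnn : 0 ≤ 1 - Complex.normSq w := by
    rw [← Complex.sq_norm]; nlinarith [norm_nonneg w]
  exact div_le_div₀ hnn hnum hd0 hden

lemma Pfun_pos (μ lam u : ℂ) (hμ : 0 < μ.re) (hlam : ‖lam‖ < 1)
    (hu : ‖u‖ < (1 - ‖lam‖ ^ 2) / (1 + ‖lam‖) ^ 2
        * ‖μ‖ / (4 * Real.pi)) {z : ℂ} (hz : ‖z‖ < 1) :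
    0 < (Pfun μ (fA μ lam u) z).re := by
  have hμ0 : μ ≠ 0 := fun h => by simp [h] at hμ
  have hμa : 0 < ‖μ‖ := norm_pos_iff.2 hμ0
  rw [Pfun_eq μ lam u hμ0 hlam hz, Complex.add_re]
  have key1 := re_cayley hlam hz
  have habs : ‖(4 * (Real.pi : ℂ) / μ * u * z ^ 2)‖
      = 4 * Real.pi / ‖μ‖ * ‖u‖ * ‖z‖ ^ 2 := by
    rw [norm_mul, norm_mul, norm_div, norm_mul, norm_pow]
    norm_num [Complex.norm_real, _root_.abs_of_nonneg Real.pi_pos.le]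
  have key2 : ‖(4 * (Real.pi : ℂ) / μ * u * z ^ 2)‖
      < (1 - ‖lam‖ ^ 2) / (1 + ‖lam‖) ^ 2 := by
    rw [habs]
    have hz2 : ‖z‖ ^ 2 ≤ 1 := by nlinarith [norm_nonneg z]
    have hu0 : 0 ≤ ‖u‖ := norm_nonneg u
    have hπ : (0:ℝ) < Real.pi := Real.pi_pos
    have h1 : ‖u‖ * (4 * Real.pi)
        < (1 - ‖lam‖ ^ 2) / (1 + ‖lam‖) ^ 2 * ‖μ‖ :=
      (lt_div_iff₀ (by positivity)).mp hu
    rw [div_mul_eq_mul_div, div_mul_eq_mul_div, div_lt_iff₀ hμa]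
    nlinarith [mul_nonneg (mul_nonneg (by positivity : (0:ℝ) ≤ 4 * Real.pi) hu0)
      (sub_nonneg.2 hz2)]
  have hm : 0 < (1 - ‖lam‖ ^ 2) / (1 + ‖lam‖) ^ 2 := by
    have h := norm_nonneg lam
    apply div_pos (by nlinarith) (by positivity)
  have hneg := (abs_le.1 (Complex.abs_re_le_norm (4 * (Real.pi : ℂ) / μ * u * z ^ 2))).1
  linarith

lemma memFlam_fA (μ lam u : ℂ) (hμ : 0 < μ.re) (hlam : ‖lam‖ < 1)
    (hu : ‖u‖ < (1 - ‖lam‖ ^ 2) / (1 + ‖lam‖) ^ 2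
        * ‖μ‖ / (4 * Real.pi)) :
    memFlam μ lam (fA μ lam u) := by
  refine ⟨⟨?_, ?_, fA_zero μ lam u, ?_⟩, ?_⟩
  · exact DifferentiableOn.analyticOnNhd
      (fun z hz => (hasDerivAt_fA μ lam u hlam
        (abs_of_mem hz)).differentiableAt.differentiableWithinAt)
      Metric.isOpen_ball
  · exact fun z _ => Complex.exp_ne_zero _
  · exact fun z hz => Pfun_pos μ lam u hμ hlam hu (abs_of_mem hz)
  · rw [deriv_fA μ lam u hlam (by norm_num : ‖(0:ℂ)‖ < 1), fA_zero, hA']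
    norm_num
    exact Or.inl (by ring)

end Stmt4Aux

end Stmt4AuxSec

theorem stmt4 (μ lam z₀ : ℂ) (hμ : 0 < μ.re) (hlam : ‖lam‖ < 1)
    (hz₀ : z₀ ∈ unitDisk) (hz₀0 : z₀ ≠ 0) :
    μ / (Real.pi : ℂ) * Complex.log ((1 - z₀) / (1 - lam * z₀)) ∈
      interior (Vset μ lam z₀) := by
  have hz : ‖z₀‖ < 1 := Stmt4Aux.abs_of_mem hz₀
  have hμ0 : μ ≠ 0 := fun h => by simp [h] at hμ
  have hμa : 0 < ‖μ‖ := norm_pos_iff.2 hμ0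
  have hla := norm_nonneg lam
  have hπ : (0:ℝ) < Real.pi := Real.pi_pos
  set m : ℝ := (1 - ‖lam‖ ^ 2) / (1 + ‖lam‖) ^ 2 with hm
  have hm0 : 0 < m := div_pos (by nlinarith) (by positivity)
  set r : ℝ := m * ‖μ‖ / (4 * Real.pi) with hr
  have hr0 : 0 < r := div_pos (mul_pos hm0 hμa) (by positivity)
  set w₀ : ℂ := μ / (Real.pi : ℂ) * Complex.log ((1 - z₀) / (1 - lam * z₀)) with hw₀def
  have hw₀ : w₀ = Stmt4Aux.hA μ lam 0 z₀ := by
    rw [hw₀def, Stmt4Aux.hA, Stmt4Aux.log_div_aux (Stmt4Aux.re_pos_one_sub hz)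
      (Stmt4Aux.re_pos_one_sub (Stmt4Aux.abs_mul_lt hlam hz))]
    ring
  have hz₀a : 0 < ‖z₀‖ := norm_pos_iff.2 hz₀0
  rw [mem_interior]
  refine ⟨Metric.ball w₀ (r * ‖z₀‖ ^ 2), ?_, Metric.isOpen_ball,
    Metric.mem_ball_self (by positivity)⟩
  intro w hw
  rw [Metric.mem_ball, Complex.dist_eq] at hw
  set u : ℂ := (w - w₀) / z₀ ^ 2 with hudef
  have hz2 : (z₀ : ℂ) ^ 2 ≠ 0 := pow_ne_zero _ hz₀0
  have huabs : ‖u‖ < r := by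
    rw [hudef, norm_div, norm_pow]
    rw [div_lt_iff₀ (by positivity)]
    exact hw
  refine ⟨Stmt4Aux.fA μ lam u, Stmt4Aux.memFlam_fA μ lam u hμ hlam huabs, ?_⟩
  have huz : u * z₀ ^ 2 = w - w₀ := by
    rw [hudef]; field_simp
  rw [Stmt4Aux.logf_fA μ lam u hlam hz]
  have h2 : Stmt4Aux.hA μ lam u z₀ = w₀ + u * z₀ ^ 2 := by
    rw [hw₀, Stmt4Aux.hA, Stmt4Aux.hA]; ring
  rw [h2, huz]; ring
end

section
/- Let μ ∈ ℂ with Re μ > 0 and |λ| < 1. For every f ∈ F_μ(λ) and every z ∈ D, |f'(z)/f(z) − (μ/π)·c(z,λ)| ≤ (|μ|/π)·r(z,λ), where c(z,λ) = (|z|²(conj(z) − λ)(1 − conj(λ)) − (1 − λ)(1 − conj(λ)·conj(z))) / ((1 − z)(1 − |z|²)(1 + |z|² − 2·Re(λz))) and r(z,λ) = (1 − |λ|²)|z| / ((1 − |z|²)(1 + |z|² − 2·Re(λz))). -/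
open Complex Set Metric

set_option maxHeartbeats 1000000

lemma EposA (z : ℂ) (hz : ‖z‖ < 1) : 0 < 1 - ‖z‖ ^ 2 := by
  nlinarith [norm_nonneg z]

lemma EposB (z lam : ℂ) (hz : ‖z‖ < 1) (hl : ‖lam‖ < 1) :
    0 < 1 + ‖z‖ ^ 2 - 2 * (lam * z).re := by
  have h1 : ‖lam * z‖ ≤ ‖lam‖ * ‖z‖ := by rw [norm_mul]
  have h2 := (abs_le.1 (Complex.abs_re_le_norm (lam * z))).2
  have h3 : 0 ≤ ‖z‖ := norm_nonneg z
  have h4 : 0 ≤ ‖lam‖ := norm_nonneg lam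
  have h7 : 0 < (1 - ‖z‖)^2 := pow_pos (by linarith) 2
  nlinarith

lemma habs2 (x : ℂ) : ((‖x‖ : ℂ))^2 = x * (starRingEnd ℂ) x := by
  rw [← Complex.ofReal_pow, Complex.sq_norm, Complex.mul_conj]

lemma e1 (x : ℂ) : x * (starRingEnd ℂ) x = ((‖x‖ ^ 2 : ℝ) : ℂ) := by
  rw [Complex.mul_conj, Complex.sq_norm]

lemma hTc_aux (z lam w E' : ℂ) (h1z : 1 - z ≠ 0) (hzw : 1 - z*w ≠ 0)
    (hd1 : 1 - z * (starRingEnd ℂ) z ≠ 0)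
    (hd2 : 1 + z*(starRingEnd ℂ) z - lam*z - (starRingEnd ℂ) lam * (starRingEnd ℂ) z ≠ 0)
    (hE : E' = (1 - z*(starRingEnd ℂ) z)*(1+z*(starRingEnd ℂ) z - lam*z - (starRingEnd ℂ) lam*(starRingEnd ℂ) z)) :
    (w-1)/((1-z*w)*(1-z))
      - (z*(starRingEnd ℂ) z*((starRingEnd ℂ) z - lam)*(1-(starRingEnd ℂ) lam)
          - (1-lam)*(1-(starRingEnd ℂ) lam*(starRingEnd ℂ) z))/((1-z)*E')
    = ((1-(starRingEnd ℂ) lam*(starRingEnd ℂ) z)*(w-lam)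
        + z*(starRingEnd ℂ) z*(lam - (starRingEnd ℂ) z)*(1-(starRingEnd ℂ) lam*w))/((1-z*w)*E') := by
  subst hE
  rw [div_sub_div _ _ (mul_ne_zero hzw h1z) (mul_ne_zero h1z (mul_ne_zero hd1 hd2)),
    div_eq_div_iff (mul_ne_zero (mul_ne_zero hzw h1z) (mul_ne_zero h1z (mul_ne_zero hd1 hd2)))
      (mul_ne_zero hzw (mul_ne_zero hd1 hd2))]
  ring

lemma master_aux (z lam w : ℂ) :
    (1 - lam * (starRingEnd ℂ) lam)^2 * (z * (starRingEnd ℂ) z)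
        * ((1 - z*w) * (starRingEnd ℂ) (1 - z*w))
      - ((1 - (starRingEnd ℂ) lam * (starRingEnd ℂ) z) * (w - lam)
          + z * (starRingEnd ℂ) z * (lam - (starRingEnd ℂ) z) * (1 - (starRingEnd ℂ) lam * w))
        * (starRingEnd ℂ) ((1 - (starRingEnd ℂ) lam * (starRingEnd ℂ) z) * (w - lam)
          + z * (starRingEnd ℂ) z * (lam - (starRingEnd ℂ) z) * (1 - (starRingEnd ℂ) lam * w))
    = ((1 - z * (starRingEnd ℂ) z) * (1 + z * (starRingEnd ℂ) z - lam * z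
          - (starRingEnd ℂ) lam * (starRingEnd ℂ) z))
        * ((z * (starRingEnd ℂ) z) * ((1 - (starRingEnd ℂ) lam * w)
            * (starRingEnd ℂ) (1 - (starRingEnd ℂ) lam * w))
          - (w - lam) * (starRingEnd ℂ) (w - lam)) := by
  simp only [map_sub, map_add, map_mul, map_one, Complex.conj_conj]
  ring

lemma key_alg (z lam w : ℂ) (hz : ‖z‖ < 1) (hl : ‖lam‖ < 1)
    (hw1 : ‖w‖ ≤ 1)
    (hw : ‖w - lam‖ ≤ ‖z‖ * ‖1 - (starRingEnd ℂ) lam * w‖) :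
    ‖(w - 1) / ((1 - z * w) * (1 - z)) - cfun z lam‖ ≤ rfun z lam := by
  have hA := EposA z hz
  have hB := EposB z lam hz hl
  have hE : 0 < (1 - ‖z‖ ^ 2) * (1 + ‖z‖ ^ 2 - 2 * (lam * z).re) :=
    mul_pos hA hB
  set E : ℝ := (1 - ‖z‖ ^ 2) * (1 + ‖z‖ ^ 2 - 2 * (lam * z).re) with hEdef
  have h1z : (1 : ℂ) - z ≠ 0 := by
    intro h; rw [sub_eq_zero] at h; rw [← h] at hz; simp at hz
  have hzw : (1 : ℂ) - z * w ≠ 0 := by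
    intro h; rw [sub_eq_zero] at h
    have : ‖z * w‖ < 1 := by
      rw [norm_mul]; nlinarith [norm_nonneg z, norm_nonneg w]
    rw [← h] at this; simp at this
  have hcre : (((lam * z).re : ℝ) : ℂ)
      = (lam * z + (starRingEnd ℂ) lam * (starRingEnd ℂ) z) / 2 := by
    rw [← map_mul]
    rw [show lam * z + (starRingEnd ℂ) (lam * z) = ((2 * (lam*z).re : ℝ) : ℂ) from Complex.add_conj (lam*z)]
    push_cast; ring
  have hd1 : (1:ℂ) - z * (starRingEnd ℂ) z ≠ 0 := by
    rw [← habs2 z, ← Complex.ofReal_pow, ← Complex.ofReal_one, ← Complex.ofReal_sub]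
    exact_mod_cast ne_of_gt hA
  have hd2c : ((1 + ‖z‖^2 - 2*(lam*z).re : ℝ) : ℂ)
      = 1 + z*(starRingEnd ℂ) z - lam*z - (starRingEnd ℂ) lam * (starRingEnd ℂ) z := by
    push_cast
    rw [habs2 z, hcre]; ring
  have hd2 : (1:ℂ) + z*(starRingEnd ℂ) z - lam*z - (starRingEnd ℂ) lam * (starRingEnd ℂ) z ≠ 0 := by
    rw [← hd2c]; exact_mod_cast ne_of_gt hB
  have hEc : ((E:ℝ):ℂ) = (1 - z*(starRingEnd ℂ) z)
      * (1 + z*(starRingEnd ℂ) z - lam*z - (starRingEnd ℂ) lam*(starRingEnd ℂ) z) := by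
    rw [hEdef]; push_cast; rw [habs2 z, hcre]; ring
  have hEc0 : ((E:ℝ):ℂ) ≠ 0 := by exact_mod_cast ne_of_gt hE
  -- rewrite cfun
  have hden : (1 - z) * (1 - z * (starRingEnd ℂ) z)
      * (1 + z * (starRingEnd ℂ) z - 2 * (((lam * z).re : ℝ) : ℂ)) = (1-z) * ((E:ℝ):ℂ) := by
    rw [hEc, hcre]; ring
  have hcfun : cfun z lam
      = (z*(starRingEnd ℂ) z*((starRingEnd ℂ) z - lam)*(1-(starRingEnd ℂ) lam)
          - (1-lam)*(1-(starRingEnd ℂ) lam*(starRingEnd ℂ) z))/((1-z)*((E:ℝ):ℂ)) := by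
    rw [cfun, habs2 z, hden]
  have hTc := hTc_aux z lam w ((E:ℝ):ℂ) h1z hzw hd1 hd2 hEc
  rw [← hcfun] at hTc
  rw [e1 z] at hTc
  -- master identity, real form
  have mc := master_aux z lam w
  rw [← hEc] at mc
  rw [e1 ((1-(starRingEnd ℂ) lam*(starRingEnd ℂ) z)*(w-lam)
        + z*(starRingEnd ℂ) z*(lam - (starRingEnd ℂ) z)*(1-(starRingEnd ℂ) lam*w))] at mc
  rw [e1 (1 - z*w), e1 (1 - (starRingEnd ℂ) lam * w), e1 (w - lam), e1 z, e1 lam] at mc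
  set G : ℂ := (1-(starRingEnd ℂ) lam*(starRingEnd ℂ) z)*(w-lam)
        + ((‖z‖ ^ 2 : ℝ) : ℂ)*(lam - (starRingEnd ℂ) z)*(1-(starRingEnd ℂ) lam*w) with hGdef
  have masterR : (1 - ‖lam‖^2)^2 * ‖z‖^2 * ‖1 - z*w‖^2
        - ‖G‖^2
      = E * (‖z‖^2 * ‖1 - (starRingEnd ℂ) lam*w‖^2
        - ‖w - lam‖^2) := by
    exact_mod_cast mc
  have hsq : ‖w-lam‖^2
      ≤ ‖z‖^2 * ‖1 - (starRingEnd ℂ) lam*w‖^2 := by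
    nlinarith [norm_nonneg (w - lam), norm_nonneg z,
      norm_nonneg (1 - (starRingEnd ℂ) lam*w)]
  have hll : (0:ℝ) ≤ 1 - ‖lam‖^2 := by
    nlinarith [norm_nonneg lam]
  have hRnn : 0 ≤ (1 - ‖lam‖^2) * ‖z‖ * ‖1 - z*w‖ :=
    mul_nonneg (mul_nonneg hll (norm_nonneg z)) (norm_nonneg (1 - z*w))
  have hGle : ‖G‖ ≤ (1 - ‖lam‖^2) * ‖z‖ * ‖1 - z*w‖ := by
    nlinarith [norm_nonneg G, masterR,
      mul_nonneg hE.le (by linarith :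
        (0:ℝ) ≤ ‖z‖^2 * ‖1 - (starRingEnd ℂ) lam*w‖^2
          - ‖w-lam‖^2),
      sq_nonneg (‖G‖ + (1 - ‖lam‖^2) * ‖z‖ * ‖1 - z*w‖)]
  rw [hTc, norm_div, norm_mul, rfun]
  have hEabs : ‖((E:ℝ):ℂ)‖ = E := by
    rw [Complex.norm_real, Real.norm_eq_abs]; exact abs_of_pos hE
  rw [hEabs]
  have hzwpos : 0 < ‖1 - z*w‖ := by
    simpa [norm_pos_iff] using hzw
  rw [div_le_div_iff₀ (by positivity) hE]
  calc ‖G‖ * ((1 - ‖z‖ ^ 2) * (1 + ‖z‖ ^ 2 - 2 * (lam * z).re))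
      = ‖G‖ * E := by rw [hEdef]
    _ ≤ ((1 - ‖lam‖^2) * ‖z‖ * ‖1 - z*w‖) * E := by
        nlinarith
    _ = (1 - ‖lam‖ ^ 2) * ‖z‖ * (‖1 - z * w‖ * E) := by ring

lemma blaschke_le (lam w : ℂ) (hl : ‖lam‖ ≤ 1) (hw : ‖w‖ ≤ 1) :
    ‖w - lam‖ ≤ ‖1 - (starRingEnd ℂ) lam * w‖ := by
  have e1 : ∀ x : ℂ, x * (starRingEnd ℂ) x = ((‖x‖ ^ 2 : ℝ) : ℂ) := by
    intro x; rw [Complex.mul_conj, Complex.sq_norm]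
  have mc : (1 - (starRingEnd ℂ) lam * w) * (starRingEnd ℂ) (1 - (starRingEnd ℂ) lam * w)
      - (w - lam) * (starRingEnd ℂ) (w - lam)
      = (1 - lam * (starRingEnd ℂ) lam) * (1 - w * (starRingEnd ℂ) w) := by
    simp only [map_sub, map_add, map_mul, map_one, Complex.conj_conj]
    ring
  rw [e1 (1 - (starRingEnd ℂ) lam * w), e1 (w - lam), e1 lam, e1 w] at mc
  have key : ‖1 - (starRingEnd ℂ) lam * w‖^2 - ‖w - lam‖^2
      = (1 - ‖lam‖^2) * (1 - ‖w‖^2) := by exact_mod_cast mc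
  have h1 : (0:ℝ) ≤ 1 - ‖lam‖^2 := by nlinarith [norm_nonneg lam]
  have h2 : (0:ℝ) ≤ 1 - ‖w‖^2 := by nlinarith [norm_nonneg w]
  nlinarith [norm_nonneg (w - lam), norm_nonneg (1 - (starRingEnd ℂ) lam * w),
    mul_nonneg h1 h2,
    sq_nonneg (‖w - lam‖ + ‖1 - (starRingEnd ℂ) lam * w‖)]

theorem stmt7 (μ lam : ℂ) (hμ : 0 < μ.re) (hlam : ‖lam‖ < 1)
    (f : ℂ → ℂ) (hf : memFlam μ lam f) (z : ℂ) (hz : z ∈ unitDisk) :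
    ‖deriv f z / f z - μ / (Real.pi : ℂ) * cfun z lam‖ ≤
      ‖μ‖ / Real.pi * rfun z lam := by
  obtain ⟨⟨hfa, hfne, hf0, hfP⟩, hfd⟩ := hf
  have hπ : (Real.pi : ℂ) ≠ 0 := by exact_mod_cast Real.pi_pos.ne'
  have hμ0 : μ ≠ 0 := by intro h; rw [h] at hμ; simp at hμ
  have hz' : z ∈ Metric.ball (0:ℂ) 1 := hz
  have hzlt : ‖z‖ < 1 := by
    have := mem_ball_zero_iff.1 hz'
    exact this
  rcases eq_or_ne z 0 with rfl | hz0
  · have h2 : cfun 0 lam = -(1 - lam) := by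
      simp [cfun]
    rw [hfd, hf0, div_one, h2]
    have : μ / (Real.pi:ℂ) * (lam - 1) - μ / (Real.pi:ℂ) * -(1 - lam) = 0 := by ring
    rw [this]
    simp [rfun]
  -- main case z ≠ 0
  have h0mem : (0:ℂ) ∈ Metric.ball (0:ℂ) 1 := mem_ball_self one_pos
  have h1x : ∀ x : ℂ, x ∈ Metric.ball (0:ℂ) 1 → (1:ℂ) - x ≠ 0 := by
    intro x hx h
    rw [sub_eq_zero] at h
    have := mem_ball_zero_iff.1 hx
    rw [← h] at this; simp at this
  have hfne' : ∀ x ∈ Metric.ball (0:ℂ) 1, f x ≠ 0 := fun x hx => hfne x hx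
  set P : ℂ → ℂ := Pfun μ f with hPdef
  have hPeq : ∀ x, P x = 2 * (Real.pi:ℂ) / μ * (x * deriv f x / f x) + (1 + x) / (1 - x) :=
    fun x => rfl
  have hPre : ∀ x ∈ Metric.ball (0:ℂ) 1, 0 < (P x).re := fun x hx => hfP x hx
  have hP1 : ∀ x ∈ Metric.ball (0:ℂ) 1, P x + 1 ≠ 0 := by
    intro x hx h
    have h2 : (P x + 1).re = 0 := by rw [h]; simp
    rw [Complex.add_re, Complex.one_re] at h2
    have := hPre x hx
    linarith
  have hfd' : AnalyticOnNhd ℂ (deriv f) unitDisk := hfa.deriv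
  have hPdiff : DifferentiableOn ℂ P (Metric.ball 0 1) := by
    apply DifferentiableOn.add
    · exact DifferentiableOn.const_mul
        ((differentiableOn_id.mul hfd'.differentiableOn).div hfa.differentiableOn hfne') _
    · exact DifferentiableOn.div ((differentiableOn_const 1).add differentiableOn_id)
        ((differentiableOn_const 1).sub differentiableOn_id) h1x
  set ψ : ℂ → ℂ := fun x => (P x - 1) / (P x + 1) with hψdef
  have hψdiff : DifferentiableOn ℂ ψ (Metric.ball 0 1) :=
    (hPdiff.sub (differentiableOn_const 1)).div (hPdiff.add (differentiableOn_const 1)) hP1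
  have hψlt : ∀ x ∈ Metric.ball (0:ℂ) 1, ‖ψ x‖ < 1 := by
    intro x hx
    have hre := hPre x hx
    have h2 : ‖P x - 1‖ < ‖P x + 1‖ := by
      rw [Complex.norm_def, Complex.norm_def]
      apply Real.sqrt_lt_sqrt (Complex.normSq_nonneg _)
      simp only [Complex.normSq_apply, Complex.sub_re, Complex.sub_im, Complex.add_re,
        Complex.add_im, Complex.one_re, Complex.one_im]
      nlinarith
    calc ‖ψ x‖ = ‖P x - 1‖ / ‖P x + 1‖ := by
          rw [hψdef]; exact norm_div _ _
      _ < 1 := by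
          rw [div_lt_one (lt_of_le_of_lt (norm_nonneg _) h2)]
          exact h2
  have hP0 : P 0 = 1 := by
    rw [hPeq 0, hf0]
    simp
  have hψ0 : ψ 0 = 0 := by rw [hψdef]; simp [hP0]
  have hψmaps : Set.MapsTo ψ (Metric.ball 0 1) (Metric.ball 0 1) := by
    intro x hx
    rw [mem_ball_zero_iff]
    exact hψlt x hx
  have hψz : ∀ x ∈ Metric.ball (0:ℂ) 1, ‖ψ x‖ ≤ ‖x‖ := by
    intro x hx
    exact Complex.norm_le_norm_of_mapsTo_ball hψdiff (hψmaps.mono_right ball_subset_closedBall) hψ0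
      (by exact mem_ball_zero_iff.1 hx)
  -- derivative of ψ at 0 is lam
  have hf'0 : HasDerivAt f (deriv f 0) 0 := ((hfa 0 h0mem).differentiableAt).hasDerivAt
  have hf''0 : HasDerivAt (deriv f) (deriv (deriv f) 0) 0 :=
    ((hfd' 0 h0mem).differentiableAt).hasDerivAt
  have hA : HasDerivAt (fun x => x * deriv f x) (1 * deriv f 0 + 0 * deriv (deriv f) 0) 0 :=
    (hasDerivAt_id 0).mul hf''0
  have hB : HasDerivAt (fun x => x * deriv f x / f x)
      (((1 * deriv f 0 + 0 * deriv (deriv f) 0) * f 0 - 0 * deriv f 0 * deriv f 0) / f 0 ^ 2) 0 :=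
    hA.div hf'0 (by rw [hf0]; exact one_ne_zero)
  have hC : HasDerivAt (fun x : ℂ => (1 + x) / (1 - x))
      (((0 + 1) * (1 - 0) - (1 + 0) * (0 - 1)) / (1 - 0) ^ 2) 0 :=
    (((hasDerivAt_const (0:ℂ) (1:ℂ)).add (hasDerivAt_id 0)).div
      ((hasDerivAt_const (0:ℂ) (1:ℂ)).sub (hasDerivAt_id 0)) (by norm_num))
  have hP' : HasDerivAt P (2 * lam) 0 := by
    have h := (hB.const_mul (2 * (Real.pi:ℂ) / μ)).add hC
    have hval : 2 * (Real.pi:ℂ) / μ *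
        (((1 * deriv f 0 + 0 * deriv (deriv f) 0) * f 0 - 0 * deriv f 0 * deriv f 0) / f 0 ^ 2)
        + ((0 + 1) * (1 - 0) - (1 + 0) * (0 - 1)) / (1 - 0) ^ 2 = 2 * lam := by
      rw [hfd, hf0]
      field_simp
      ring
    rw [hval] at h
    exact h
  have hψ'v : deriv ψ 0 = lam := by
    have hψ' : HasDerivAt ψ ((2 * lam * (P 0 + 1) - (P 0 - 1) * (2 * lam)) / (P 0 + 1) ^ 2) 0 :=
      (hP'.sub_const 1).div (hP'.add_const 1) (hP1 0 h0mem)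
    rw [hψ'.deriv, hP0]
    ring
  -- omega function
  set ω : ℂ → ℂ := dslope ψ 0 with hωdef
  have hωdiff : DifferentiableOn ℂ ω (Metric.ball 0 1) :=
    (Complex.differentiableOn_dslope (Metric.ball_mem_nhds 0 one_pos)).2 hψdiff
  have hω0 : ω 0 = lam := by rw [hωdef, dslope_same]; exact hψ'v
  have hωle : ∀ x ∈ Metric.ball (0:ℂ) 1, ‖ω x‖ ≤ 1 := by
    intro x hx
    rcases eq_or_ne x 0 with rfl | hx0
    · rw [hω0]; exact hlam.le
    · rw [hωdef, dslope_of_ne ψ hx0, slope_def_field, hψ0, sub_zero, sub_zero, norm_div]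
      rw [div_le_one (norm_pos_iff.mpr hx0)]
      exact hψz x hx
  have hden : ∀ x ∈ Metric.ball (0:ℂ) 1, 1 - (starRingEnd ℂ) lam * ω x ≠ 0 := by
    intro x hx h
    rw [sub_eq_zero] at h
    have hle : ‖(starRingEnd ℂ) lam * ω x‖ < 1 := by
      rw [norm_mul, Complex.norm_conj]
      nlinarith [norm_nonneg lam, norm_nonneg (ω x), hωle x hx]
    rw [← h] at hle; simp at hle
  set g : ℂ → ℂ := fun x => (ω x - lam) / (1 - (starRingEnd ℂ) lam * ω x) with hgdef
  have hgdiff : DifferentiableOn ℂ g (Metric.ball 0 1) :=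
    (hωdiff.sub (differentiableOn_const lam)).div
      ((differentiableOn_const 1).sub ((differentiableOn_const _).mul hωdiff)) hden
  have hg0 : g 0 = 0 := by rw [hgdef]; simp [hω0]
  have hgle : ∀ x ∈ Metric.ball (0:ℂ) 1, ‖g x‖ ≤ 1 := by
    intro x hx
    rw [hgdef]
    simp only
    rw [norm_div, div_le_one (norm_pos_iff.mpr (hden x hx))]
    exact blaschke_le lam (ω x) hlam.le (hωle x hx)
  -- Schwarz-Pick via shrinking radii
  have hSP1 : ∀ c : ℝ, 1 < c → ‖g z‖ ≤ c * ‖z‖ := by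
    intro c hc
    have hcpos : (0:ℝ) < c := by linarith
    set R₁ : ℝ := (max (‖z‖) c⁻¹ + 1) / 2 with hR
    have hinv : c⁻¹ < 1 := by
      rw [inv_lt_one_iff₀]; right; exact hc
    have hmax1 : max (‖z‖) c⁻¹ < 1 := max_lt hzlt hinv
    have hR1lt : R₁ < 1 := by rw [hR]; linarith
    have hzR : ‖z‖ < R₁ := by
      have := le_max_left (‖z‖) c⁻¹
      rw [hR]; linarith
    have hR1pos : 0 < R₁ := lt_of_le_of_lt (norm_nonneg z) hzR
    have hcR : 1 < c * R₁ := by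
      have h1 : c⁻¹ < R₁ := by
        have := le_max_right (‖z‖) c⁻¹
        rw [hR]; linarith
      calc (1:ℝ) = c * c⁻¹ := (mul_inv_cancel₀ (ne_of_gt hcpos)).symm
        _ < c * R₁ := by exact mul_lt_mul_of_pos_left h1 hcpos
    have hsub : Metric.ball (0:ℂ) R₁ ⊆ Metric.ball 0 1 := Metric.ball_subset_ball (by linarith)
    have hmaps : Set.MapsTo g (Metric.ball 0 R₁) (Metric.ball (g 0) (c * R₁)) := by
      intro x hx
      rw [hg0, Metric.mem_ball, dist_zero_right]
      exact lt_of_le_of_lt (hgle x (hsub hx)) hcR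
    have hd := Complex.dist_le_div_mul_dist_of_mapsTo_ball (hgdiff.mono hsub) (hmaps.mono_right ball_subset_closedBall)
      (mem_ball_zero_iff.2 (by exact hzR))
    rw [hg0, dist_zero_right, dist_zero_right] at hd
    calc ‖g z‖ ≤ c * R₁ / R₁ * ‖z‖ := hd
      _ = c * ‖z‖ := by field_simp
  have hSP : ‖g z‖ ≤ ‖z‖ := by
    by_contra hcon
    push_neg at hcon
    have hzpos : 0 < ‖z‖ := norm_pos_iff.mpr hz0
    have hc1 : 1 < (‖g z‖ + ‖z‖) / (2 * ‖z‖) := by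
      rw [lt_div_iff₀ (by positivity)]
      linarith
    have h2 := hSP1 _ hc1
    rw [div_mul_eq_mul_div, mul_comm] at h2
    have h3 : ‖g z‖ * (2 * ‖z‖)
        ≤ ‖z‖ * (‖g z‖ + ‖z‖) := by
      rw [← le_div_iff₀ (by positivity)]
      calc ‖g z‖ ≤ ‖z‖ * (‖g z‖ + ‖z‖) / (2 * ‖z‖) := h2
        _ = ‖z‖ * (‖g z‖ + ‖z‖) / (2 * ‖z‖) := rfl
    nlinarith
  -- the main bound
  set w : ℂ := ω z with hwdef
  have hψz_eq : ψ z = z * w := by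
    rw [hwdef, hωdef, dslope_of_ne ψ hz0, slope_def_field, hψ0, sub_zero, sub_zero]
    field_simp
  have hw : ‖w - lam‖ ≤ ‖z‖ * ‖1 - (starRingEnd ℂ) lam * w‖ := by
    have := hSP
    rw [hgdef] at this
    simp only at this
    rw [norm_div, div_le_iff₀ (norm_pos_iff.mpr (hden z hz'))] at this
    calc ‖w - lam‖ ≤ ‖z‖ * ‖1 - (starRingEnd ℂ) lam * ω z‖ := this
      _ = ‖z‖ * ‖1 - (starRingEnd ℂ) lam * w‖ := by rw [← hwdef]
  have hzw : (1:ℂ) - z * w ≠ 0 := by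
    intro h
    rw [sub_eq_zero] at h
    have := hψlt z hz'
    rw [hψz_eq, ← h] at this
    simp at this
  have h1z : (1:ℂ) - z ≠ 0 := h1x z hz'
  have hfz : f z ≠ 0 := hfne z hz
  have hlin : z * w * (P z + 1) = P z - 1 := by
    have h : ψ z = (P z - 1) / (P z + 1) := rfl
    rw [hψz_eq] at h
    rw [h]
    field_simp
    exact mul_div_cancel_right₀ _ (hP1 z hz')
  have hF : deriv f z / f z = μ / (Real.pi:ℂ) * ((w - 1) / ((1 - z * w) * (1 - z))) := by
    rw [hPeq z] at hlin
    field_simp at hlin ⊢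
    apply mul_left_cancel₀ (show (-2:ℂ) * z ≠ 0 from mul_ne_zero (by norm_num) hz0)
    linear_combination hlin
  rw [hF, ← mul_sub, norm_mul, norm_div, Complex.norm_real, Real.norm_eq_abs, abs_of_pos Real.pi_pos]
  exact mul_le_mul_of_nonneg_left (key_alg z lam w hzlt hlam (hωle z hz') hw) (by positivity)
end

section
/- Let μ ∈ ℂ with Re μ > 0, |λ| < 1, f ∈ F_μ(λ), and z ∈ D \ {0}. Then equality |f'(z)/f(z) − (μ/π)·c(z,λ)| = (|μ|/π)·r(z,λ) holds if and only if there exists θ ∈ ℝ such that f = H_{e^{iθ},λ} on D, where c(z,λ) = (|z|²(conj(z) − λ)(1 − conj(λ)) − (1 − λ)(1 − conj(λ)·conj(z))) / ((1 − z)(1 − |z|²)(1 + |z|² − 2·Re(λz))) and r(z,λ) = (1 − |λ|²)|z| / ((1 − |z|²)(1 + |z|² − 2·Re(λz))). -/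
open Complex Set Metric

-- ### Auxiliary lemmas

open intervalIntegral in
lemma aux_never : True := trivial

lemma one_sub_ne_zero_of_abs_lt {z : ℂ} (h : ‖z‖ < 1) : (1:ℂ) - z ≠ 0 := by
  intro h0
  have : z = 1 := by linear_combination -h0
  simp [this] at h

lemma one_add_ne_zero_of_abs_lt {z : ℂ} (h : ‖z‖ < 1) : (1:ℂ) + z ≠ 0 := by
  intro h0
  have : z = -1 := by linear_combination h0
  simp [this] at h

lemma normSq_lt_one {z : ℂ} (h : ‖z‖ < 1) : Complex.normSq z < 1 := by
  have := Complex.sq_norm z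
  nlinarith [norm_nonneg z]

lemma Apos {z lam : ℂ} (hz : ‖z‖ < 1) (hl : ‖lam‖ < 1) :
    (0:ℝ) < 1 + Complex.normSq z - 2 * (lam * z).re := by
  have h1 : (lam * z).re ≤ ‖lam‖ * ‖z‖ := by
    calc (lam * z).re ≤ ‖lam * z‖ := Complex.re_le_norm _
      _ = ‖lam‖ * ‖z‖ := norm_mul _ _
  have h3 : Complex.normSq z = ‖z‖ ^ 2 := (Complex.sq_norm z).symm
  nlinarith [norm_nonneg z, norm_nonneg lam, sq_nonneg (1 - ‖z‖),
    mul_nonneg (norm_nonneg z) (sub_nonneg.mpr hl.le)]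

set_option maxHeartbeats 4000000 in
lemma main_real_id (z lam w : ℂ) :
    Complex.normSq ((w - 1) * ((1 - z) * (1 - Complex.normSq z) * (1 + Complex.normSq z - 2 * (lam*z).re))
        - (1 - z*w) * (1 - z) * ((Complex.normSq z : ℂ) * ((starRingEnd ℂ) z - lam) * (1 - (starRingEnd ℂ) lam)
            - (1 - lam) * (1 - (starRingEnd ℂ) lam * (starRingEnd ℂ) z)))
      * ((1 - Complex.normSq z) * (1 + Complex.normSq z - 2 * (lam*z).re))^2
    = (1 - Complex.normSq lam)^2 * Complex.normSq z
        * (Complex.normSq ((1 - z*w)*(1 - z))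
          * Complex.normSq ((1 - z) * (1 - Complex.normSq z) * (1 + Complex.normSq z - 2 * (lam*z).re)))
      + (Complex.normSq (w - lam) - Complex.normSq z * Complex.normSq (1 - (starRingEnd ℂ) lam * w))
        * ((Complex.normSq (1 - z))^2 * (1 - Complex.normSq z)^3 * (1 + Complex.normSq z - 2 * (lam*z).re)^3) := by
  have hre : ((lam * z).re : ℂ) = (lam * z + (starRingEnd ℂ) lam * (starRingEnd ℂ) z) / 2 := by
    rw [Complex.re_eq_add_conj]; rw [map_mul]
  rw [← Complex.ofReal_inj]
  simp only [hre, ← Complex.mul_conj, map_sub, map_mul, map_add, map_one, map_pow, map_ofNat,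
    map_div₀, Complex.conj_conj, Complex.conj_ofReal, Complex.ofReal_mul, Complex.ofReal_sub,
    Complex.ofReal_add, Complex.ofReal_pow, Complex.ofReal_one, Complex.ofReal_ofNat]
  ring

set_option maxHeartbeats 1000000 in
lemma key_iff (z lam w : ℂ) (hz1 : ‖z‖ < 1) (hl : ‖lam‖ < 1)
    (hw : ‖w‖ ≤ 1) :
    ‖(w - 1) / ((1 - z * w) * (1 - z)) - cfun z lam‖ = rfun z lam ↔
      Complex.normSq (w - lam) = Complex.normSq z * Complex.normSq (1 - (starRingEnd ℂ) lam * w) := by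
  have habs : ∀ x : ℂ, ((‖x‖ : ℂ))^2 = ((Complex.normSq x : ℝ) : ℂ) := fun x => by
    rw [← Complex.ofReal_pow, Complex.sq_norm]
  have hz : (1:ℂ) - z ≠ 0 := one_sub_ne_zero_of_abs_lt hz1
  have hzw : (1:ℂ) - z * w ≠ 0 := by
    apply one_sub_ne_zero_of_abs_lt
    rw [norm_mul]
    calc ‖z‖ * ‖w‖ ≤ ‖z‖ * 1 :=
          mul_le_mul_of_nonneg_left hw (norm_nonneg z)
      _ < 1 := by rwa [mul_one]
  have h2 : (0:ℝ) < 1 - Complex.normSq z := by linarith [normSq_lt_one hz1]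
  have h2l : (0:ℝ) < 1 - Complex.normSq lam := by linarith [normSq_lt_one hl]
  have hA : (0:ℝ) < 1 + Complex.normSq z - 2 * (lam * z).re := Apos hz1 hl
  set Nc : ℂ := (Complex.normSq z : ℝ) * ((starRingEnd ℂ) z - lam) * (1 - (starRingEnd ℂ) lam)
      - (1 - lam) * (1 - (starRingEnd ℂ) lam * (starRingEnd ℂ) z) with hNc
  set Dc : ℂ := (1 - z) * ((1:ℂ) - (Complex.normSq z : ℝ))
      * (1 + (Complex.normSq z : ℝ) - 2 * (((lam*z).re : ℝ) : ℂ)) with hDc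
  set D1 : ℂ := (1 - z * w) * (1 - z) with hD1
  have hc : cfun z lam = Nc / Dc := by
    rw [cfun, habs]
  have hDc0 : Dc ≠ 0 := by
    rw [hDc]
    apply mul_ne_zero (mul_ne_zero hz ?_) ?_
    · intro h
      have : ((1 - Complex.normSq z : ℝ) : ℂ) = 0 := by push_cast; linear_combination h
      rw [Complex.ofReal_eq_zero] at this; linarith
    · intro h
      have : ((1 + Complex.normSq z - 2 * (lam*z).re : ℝ) : ℂ) = 0 := by
        push_cast; linear_combination h
      rw [Complex.ofReal_eq_zero] at this; linarith
  have hD10 : D1 ≠ 0 := mul_ne_zero hzw hz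
  have split : (w - 1) / ((1 - z * w) * (1 - z)) - cfun z lam
      = ((w - 1) * Dc - D1 * Nc) / (D1 * Dc) := by
    rw [hc, div_sub_div _ _ hD10 hDc0]
  set Num : ℂ := (w - 1) * Dc - D1 * Nc with hNum
  have hr0 : 0 ≤ rfun z lam := by
    rw [rfun]
    apply div_nonneg
    · apply mul_nonneg _ (norm_nonneg z)
      nlinarith [norm_nonneg lam]
    · apply mul_nonneg
      · nlinarith [norm_nonneg z]
      · rw [← Complex.sq_norm] at hA; linarith
  rw [split]
  have sqiff : ‖Num / (D1 * Dc)‖ = rfun z lam ↔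
      Complex.normSq (Num / (D1 * Dc)) = rfun z lam ^ 2 := by
    constructor
    · intro h; rw [← Complex.sq_norm, h]
    · intro h
      rw [Complex.norm_def, h, Real.sqrt_sq hr0]
  rw [sqiff, map_div₀ Complex.normSq, map_mul Complex.normSq]
  have e1 : rfun z lam ^ 2 = ((1 - Complex.normSq lam)^2 * Complex.normSq z) /
      ((1 - Complex.normSq z)^2 * (1 + Complex.normSq z - 2*(lam*z).re)^2) := by
    simp only [rfun, div_pow, mul_pow, Complex.sq_norm]
  rw [e1]
  have hden1 : Complex.normSq D1 * Complex.normSq Dc ≠ 0 :=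
    mul_ne_zero (fun h => hD10 (Complex.normSq_eq_zero.mp h))
      (fun h => hDc0 (Complex.normSq_eq_zero.mp h))
  have hden2 : (1 - Complex.normSq z)^2 * (1 + Complex.normSq z - 2*(lam*z).re)^2 ≠ 0 := by
    positivity
  rw [div_eq_div_iff hden1 hden2]
  have main := main_real_id z lam w
  rw [hNum, hDc, hD1, hNc]
  have hK : (0:ℝ) < (Complex.normSq (1 - z))^2 * (1 - Complex.normSq z)^3
      * (1 + Complex.normSq z - 2*(lam*z).re)^3 := by
    have := Complex.normSq_pos.mpr hz
    positivity
  constructor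
  · intro h
    have hB : (Complex.normSq (w - lam)
        - Complex.normSq z * Complex.normSq (1 - (starRingEnd ℂ) lam * w))
        * ((Complex.normSq (1 - z))^2 * (1 - Complex.normSq z)^3
          * (1 + Complex.normSq z - 2*(lam*z).re)^3) = 0 := by
      linear_combination h - main
    rcases mul_eq_zero.mp hB with h' | h'
    · linarith [h']
    · exact absurd h' hK.ne'
  · intro h
    linear_combination main + ((Complex.normSq (1 - z))^2 * (1 - Complex.normSq z)^3
      * (1 + Complex.normSq z - 2*(lam*z).re)^3) * h

lemma one_sub_conj_mul_ne {lam v : ℂ} (hl : ‖lam‖ < 1) (hv : ‖v‖ ≤ 1) :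
    (1:ℂ) - (starRingEnd ℂ) lam * v ≠ 0 := by
  apply one_sub_ne_zero_of_abs_lt
  rw [norm_mul, Complex.norm_conj]
  nlinarith [norm_nonneg lam, norm_nonneg v]

lemma one_add_conj_mul_ne {lam v : ℂ} (hl : ‖lam‖ < 1) (hv : ‖v‖ ≤ 1) :
    (1:ℂ) + (starRingEnd ℂ) lam * v ≠ 0 := by
  apply one_add_ne_zero_of_abs_lt
  rw [norm_mul, Complex.norm_conj]
  nlinarith [norm_nonneg lam, norm_nonneg v]

lemma moebius_normSq_diff (lam v : ℂ) :
    Complex.normSq (1 - (starRingEnd ℂ) lam * v) - Complex.normSq (v - lam)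
      = (1 - Complex.normSq lam) * (1 - Complex.normSq v) := by
  rw [← Complex.ofReal_inj]
  simp only [← Complex.mul_conj, map_sub, map_mul, map_one, Complex.conj_conj,
    Complex.ofReal_mul, Complex.ofReal_sub, Complex.ofReal_one]
  ring

lemma moebius_normSq_diff' (lam v : ℂ) :
    Complex.normSq (1 + (starRingEnd ℂ) lam * v) - Complex.normSq (v + lam)
      = (1 - Complex.normSq lam) * (1 - Complex.normSq v) := by
  rw [← Complex.ofReal_inj]
  simp only [← Complex.mul_conj, map_sub, map_add, map_mul, map_one, Complex.conj_conj,
    Complex.ofReal_mul, Complex.ofReal_sub, Complex.ofReal_add, Complex.ofReal_one]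
  ring

lemma abs_moebius_lt_one {lam v : ℂ} (hl : ‖lam‖ < 1) (hv : ‖v‖ < 1) :
    ‖(v - lam) / (1 - (starRingEnd ℂ) lam * v)‖ < 1 := by
  have hden := one_sub_conj_mul_ne hl hv.le
  rw [norm_div, div_lt_one (norm_pos_iff.mpr hden)]
  have hid := moebius_normSq_diff lam v
  nlinarith [Complex.sq_norm (v - lam), Complex.sq_norm (1 - (starRingEnd ℂ) lam * v),
    norm_nonneg (v - lam), norm_nonneg (1 - (starRingEnd ℂ) lam * v),
    normSq_lt_one hl, normSq_lt_one hv]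

lemma abs_dl_lt_one {lam u : ℂ} (hl : ‖lam‖ < 1) (hu : ‖u‖ < 1) :
    ‖dl lam u‖ < 1 := by
  have hden := one_add_conj_mul_ne hl hu.le
  rw [dl, norm_div, div_lt_one (norm_pos_iff.mpr hden)]
  have hid := moebius_normSq_diff' lam u
  nlinarith [Complex.sq_norm (u + lam), Complex.sq_norm (1 + (starRingEnd ℂ) lam * u),
    norm_nonneg (u + lam), norm_nonneg (1 + (starRingEnd ℂ) lam * u),
    normSq_lt_one hl, normSq_lt_one hu]

lemma dl_eqs {lam u : ℂ} (h : (1:ℂ) + (starRingEnd ℂ) lam * u ≠ 0) :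
    (dl lam u - lam) * (1 + (starRingEnd ℂ) lam * u) = u * (1 - (Complex.normSq lam : ℝ)) ∧
    (1 - (starRingEnd ℂ) lam * dl lam u) * (1 + (starRingEnd ℂ) lam * u)
      = 1 - (Complex.normSq lam : ℝ) := by
  have hc : ((Complex.normSq lam : ℝ) : ℂ) = lam * (starRingEnd ℂ) lam := (Complex.mul_conj lam).symm
  rw [dl]
  constructor
  · have hq := div_mul_cancel₀ (u + lam) h
    linear_combination hq + u * hc
  · field_simp
    linear_combination hc

lemma normSq_dl_eq {lam u : ℂ} (hl : ‖lam‖ < 1) (hu : ‖u‖ < 1) :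
    Complex.normSq (dl lam u - lam)
      = Complex.normSq u * Complex.normSq (1 - (starRingEnd ℂ) lam * dl lam u) := by
  have hden : (1:ℂ) + (starRingEnd ℂ) lam * u ≠ 0 := one_add_conj_mul_ne hl hu.le
  obtain ⟨e1, e2⟩ := dl_eqs hden
  have n1 := congrArg Complex.normSq e1
  have n2 := congrArg Complex.normSq e2
  rw [map_mul] at n1
  rw [map_mul] at n2
  rw [map_mul] at n1
  have hne : Complex.normSq (1 + (starRingEnd ℂ) lam * u) ≠ 0 := by
    simpa [Complex.normSq_eq_zero] using hden
  apply mul_right_cancel₀ hne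
  calc Complex.normSq (dl lam u - lam) * Complex.normSq (1 + (starRingEnd ℂ) lam * u)
      = Complex.normSq u * Complex.normSq ((1 : ℂ) - (Complex.normSq lam : ℝ)) := n1
    _ = Complex.normSq u * (Complex.normSq (1 - (starRingEnd ℂ) lam * dl lam u)
          * Complex.normSq (1 + (starRingEnd ℂ) lam * u)) := by rw [n2]
    _ = Complex.normSq u * Complex.normSq (1 - (starRingEnd ℂ) lam * dl lam u)
          * Complex.normSq (1 + (starRingEnd ℂ) lam * u) := by ring

open intervalIntegral in
lemma hasDerivAt_segment_integral {F : ℂ → ℂ} (hF : ∀ w ∈ Metric.ball (0:ℂ) 1, AnalyticAt ℂ F w)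
    {z : ℂ} (hz : z ∈ Metric.ball (0:ℂ) 1) :
    HasDerivAt (fun w => ∫ t in (0:ℝ)..1, F (t * w) * w) (F z) z := by
  obtain ⟨r, hr1, hr2⟩ : ∃ r : ℝ, ‖z‖ < r ∧ r < 1 :=
    exists_between (by simpa [Metric.mem_ball, Complex.dist_eq] using hz)
  have hr0 : 0 < r := lt_of_le_of_lt (norm_nonneg z) hr1
  have hεpos : 0 < r - ‖z‖ := by linarith
  have hsub' : ∀ {t : ℝ} {w : ℂ}, t ∈ Set.Icc (0:ℝ) 1 → ‖w‖ ≤ r →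
      (t : ℂ) * w ∈ Metric.ball (0:ℂ) 1 := by
    intro t w ht hw
    simp only [Metric.mem_ball, Complex.dist_eq, sub_zero, map_mul, norm_mul, Complex.norm_real, Real.norm_eq_abs,
      _root_.abs_of_nonneg ht.1]
    nlinarith [ht.1, ht.2, norm_nonneg w]
  have hball : ∀ {x : ℂ}, x ∈ Metric.ball z (r - ‖z‖) → ‖x‖ ≤ r := by
    intro x hx
    simp only [Metric.mem_ball, Complex.dist_eq] at hx
    calc ‖x‖ = ‖x - z + z‖ := by ring_nf
      _ ≤ ‖x - z‖ + ‖z‖ := norm_add_le _ _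
      _ ≤ r := by linarith
  have hFan : AnalyticOnNhd ℂ F (Metric.ball (0:ℂ) 1) := hF
  have hFc : ContinuousOn F (Metric.ball (0:ℂ) 1) :=
    fun w hw => (hF w hw).continuousAt.continuousWithinAt
  have hF'c : ContinuousOn (deriv F) (Metric.ball (0:ℂ) 1) := hFan.deriv.continuousOn
  -- uniform bound for the w-derivative on the compact set
  obtain ⟨C, hC⟩ : ∃ C, ∀ p ∈ (Set.Icc (0:ℝ) 1) ×ˢ (Metric.closedBall (0:ℂ) r),
      ‖F ((p.1 : ℂ) * p.2) + (p.1 : ℂ) * (deriv F ((p.1 : ℂ) * p.2) * p.2)‖ ≤ C := by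
    apply ((isCompact_Icc.prod (isCompact_closedBall _ _)).exists_bound_of_continuousOn)
    have hmapsto : Set.MapsTo (fun p : ℝ × ℂ => (p.1 : ℂ) * p.2)
        ((Set.Icc (0:ℝ) 1) ×ˢ (Metric.closedBall (0:ℂ) r)) (Metric.ball (0:ℂ) 1) := by
      intro p hp
      exact hsub' hp.1 (by simpa [Metric.mem_closedBall, Complex.dist_eq] using hp.2)
    have hcont : ContinuousOn (fun p : ℝ × ℂ => (p.1 : ℂ) * p.2)
        ((Set.Icc (0:ℝ) 1) ×ˢ (Metric.closedBall (0:ℂ) r)) :=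
      (Complex.continuous_ofReal.comp continuous_fst).continuousOn.mul continuous_snd.continuousOn
    apply ContinuousOn.add
    · exact hFc.comp hcont hmapsto
    · exact ((Complex.continuous_ofReal.comp continuous_fst).continuousOn.mul
        ((hF'c.comp hcont hmapsto).mul continuous_snd.continuousOn))
  have hint_cont : ∀ {x : ℂ}, ‖x‖ ≤ r →
      ContinuousOn (fun t : ℝ => F ((t:ℂ) * x) * x) (Set.Icc (0:ℝ) 1) := by
    intro x hx
    apply ContinuousOn.mul _ continuousOn_const
    apply hFc.comp ((Complex.continuous_ofReal.continuousOn).mul continuousOn_const)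
    intro t ht
    exact hsub' ht hx
  have key := hasDerivAt_integral_of_dominated_loc_of_deriv_le (μ := MeasureTheory.volume)
      (F := fun (w : ℂ) (t : ℝ) => F ((t:ℂ) * w) * w)
      (F' := fun (w : ℂ) (t : ℝ) => F ((t:ℂ) * w) + (t:ℂ) * (deriv F ((t:ℂ) * w) * w))
      (x₀ := z) (a := 0) (b := 1) (bound := fun _ => C) (Metric.ball_mem_nhds z hεpos) ?_ ?_ ?_ ?_ ?_ ?_
  · -- now compute the integral of the derivative
    have hval : (∫ t in (0:ℝ)..1, (F ((t:ℂ) * z) + (t:ℂ) * (deriv F ((t:ℂ) * z) * z))) = F z := by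
      have hu : ∀ t ∈ Set.uIcc (0:ℝ) 1, HasDerivAt (fun s : ℝ => (s:ℂ) * F ((s:ℂ) * z))
          (F ((t:ℂ) * z) + (t:ℂ) * (deriv F ((t:ℂ) * z) * z)) t := by
        intro t ht
        rw [Set.uIcc_of_le zero_le_one] at ht
        have hmem : (t:ℂ) * z ∈ Metric.ball (0:ℂ) 1 := hsub' ht hr1.le
        have h1 : HasDerivAt F (deriv F ((t:ℂ) * z)) ((t:ℂ) * z) :=
          (hF _ hmem).differentiableAt.hasDerivAt
        have h2 : HasDerivAt (fun w : ℂ => w * z) z (t:ℂ) := by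
          simpa using (hasDerivAt_id ((t:ℂ))).mul_const z
        have h3 : HasDerivAt (fun w : ℂ => F (w * z)) (deriv F ((t:ℂ) * z) * z) (t:ℂ) :=
          h1.comp ((t:ℂ)) h2
        have h4 : HasDerivAt (fun w : ℂ => w * F (w * z))
            (1 * F ((t:ℂ) * z) + (t:ℂ) * (deriv F ((t:ℂ) * z) * z)) (t:ℂ) :=
          (hasDerivAt_id ((t:ℂ))).mul h3
        have h5 := h4.comp_ofReal
        simpa using h5
      have hint : IntervalIntegrable (fun t : ℝ => F ((t:ℂ) * z) + (t:ℂ) * (deriv F ((t:ℂ) * z) * z))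
          MeasureTheory.volume 0 1 := by
        apply ContinuousOn.intervalIntegrable
        rw [Set.uIcc_of_le zero_le_one]
        apply ContinuousOn.add
        · apply hFc.comp ((Complex.continuous_ofReal.continuousOn).mul continuousOn_const)
          intro t ht; exact hsub' ht hr1.le
        · apply (Complex.continuous_ofReal.continuousOn).mul
          apply ContinuousOn.mul _ continuousOn_const
          apply hF'c.comp ((Complex.continuous_ofReal.continuousOn).mul continuousOn_const)
          intro t ht; exact hsub' ht hr1.le
      rw [integral_eq_sub_of_hasDerivAt hu hint]
      push_cast
      simp
    rw [hval] at key
    exact key.2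
  · -- hF_meas
    filter_upwards [Metric.ball_mem_nhds z hεpos] with x hx
    exact ((hint_cont (hball hx)).mono (by rw [Set.uIoc_of_le zero_le_one]; exact Set.Ioc_subset_Icc_self)).aestronglyMeasurable measurableSet_uIoc
  · -- hF_int
    apply ContinuousOn.intervalIntegrable
    rw [Set.uIcc_of_le zero_le_one]
    exact hint_cont hr1.le
  · -- hF'_meas
    apply ContinuousOn.aestronglyMeasurable _ measurableSet_uIoc
    have : ContinuousOn (fun t : ℝ => F ((t:ℂ) * z) + (t:ℂ) * (deriv F ((t:ℂ) * z) * z))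
        (Set.Icc (0:ℝ) 1) := by
      apply ContinuousOn.add
      · apply hFc.comp ((Complex.continuous_ofReal.continuousOn).mul continuousOn_const)
        intro t ht; exact hsub' ht hr1.le
      · apply (Complex.continuous_ofReal.continuousOn).mul
        apply ContinuousOn.mul _ continuousOn_const
        apply hF'c.comp ((Complex.continuous_ofReal.continuousOn).mul continuousOn_const)
        intro t ht; exact hsub' ht hr1.le
    exact this.mono (by rw [Set.uIoc_of_le zero_le_one]; exact Set.Ioc_subset_Icc_self)
  · -- h_bound
    apply Filter.Eventually.of_forall
    intro t ht x hx
    have ht' : t ∈ Set.Icc (0:ℝ) 1 := by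
      rw [Set.uIoc_of_le zero_le_one] at ht; exact Set.Ioc_subset_Icc_self ht
    exact hC ((t, x)) ⟨ht', by simpa [Metric.mem_closedBall, Complex.dist_eq] using hball hx⟩
  · -- bound_integrable
    exact intervalIntegrable_const
  · -- h_diff
    apply Filter.Eventually.of_forall
    intro t ht x hx
    have ht' : t ∈ Set.Icc (0:ℝ) 1 := by
      rw [Set.uIoc_of_le zero_le_one] at ht; exact Set.Ioc_subset_Icc_self ht
    have hmem : (t:ℂ) * x ∈ Metric.ball (0:ℂ) 1 := hsub' ht' (hball hx)
    have h1 : HasDerivAt F (deriv F ((t:ℂ) * x)) ((t:ℂ) * x) :=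
      (hF _ hmem).differentiableAt.hasDerivAt
    have h2 : HasDerivAt (fun w : ℂ => (t:ℂ) * w) (t:ℂ) x := by
      simpa using (hasDerivAt_id x).const_mul (t:ℂ)
    have h3 : HasDerivAt (fun w : ℂ => F ((t:ℂ) * w)) (deriv F ((t:ℂ) * x) * (t:ℂ)) x :=
      h1.comp x h2
    have h4 := h3.mul (hasDerivAt_id x)
    refine h4.congr_deriv ?_
    simp only [id]
    ring

lemma mem_ball_abs {ζ : ℂ} (h : ζ ∈ Metric.ball (0:ℂ) 1) : ‖ζ‖ < 1 := by
  simpa [Metric.mem_ball, Complex.dist_eq] using h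

lemma abs_mem_ball {ζ : ℂ} (h : ‖ζ‖ < 1) : ζ ∈ Metric.ball (0:ℂ) 1 := by
  simpa [Metric.mem_ball, Complex.dist_eq] using h

lemma Fa_analytic {lam a : ℂ} (hl : ‖lam‖ < 1) (ha : ‖a‖ = 1) :
    ∀ ζ ∈ Metric.ball (0:ℂ) 1, AnalyticAt ℂ
      (fun ζ => (dl lam (a * ζ) - 1) / ((1 - dl lam (a * ζ) * ζ) * (1 - ζ))) ζ := by
  intro ζ hζ
  have hζ1 : ‖ζ‖ < 1 := mem_ball_abs hζ
  have hu : ‖a * ζ‖ < 1 := by rw [norm_mul, ha, one_mul]; exact hζ1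
  have hden : (1:ℂ) + (starRingEnd ℂ) lam * (a * ζ) ≠ 0 := one_add_conj_mul_ne hl hu.le
  have hdl_an : AnalyticAt ℂ (fun ζ => dl lam (a * ζ)) ζ := by
    have heq : (fun ζ => dl lam (a * ζ))
        = fun ζ : ℂ => (a * ζ + lam) / (1 + (starRingEnd ℂ) lam * (a * ζ)) := by
      funext x; rw [dl]
    rw [heq]
    exact ((analyticAt_const.mul analyticAt_id).add analyticAt_const).div
      (analyticAt_const.add (analyticAt_const.mul (analyticAt_const.mul analyticAt_id))) hden
  have h1 : ‖dl lam (a * ζ)‖ < 1 := abs_dl_lt_one hl hu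
  have hden2 : ((1:ℂ) - dl lam (a * ζ) * ζ) * (1 - ζ) ≠ 0 := by
    apply mul_ne_zero
    · apply one_sub_ne_zero_of_abs_lt
      rw [norm_mul]
      nlinarith [norm_nonneg (dl lam (a * ζ)), norm_nonneg ζ]
    · exact one_sub_ne_zero_of_abs_lt hζ1
  exact (hdl_an.sub analyticAt_const).div
    ((analyticAt_const.sub (hdl_an.mul analyticAt_id)).mul (analyticAt_const.sub analyticAt_id))
    hden2

lemma hasDerivAt_Hlog (μ : ℂ) {lam a : ℂ} (hl : ‖lam‖ < 1) (ha : ‖a‖ = 1)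
    {z : ℂ} (hz : z ∈ Metric.ball (0:ℂ) 1) :
    HasDerivAt (Hlog μ lam a)
      (μ / (Real.pi:ℂ) * ((dl lam (a * z) - 1) / ((1 - dl lam (a * z) * z) * (1 - z)))) z :=
  (hasDerivAt_segment_integral (Fa_analytic hl ha) hz).const_mul (μ / (Real.pi:ℂ))

lemma Hlog_zero (μ lam a : ℂ) : Hlog μ lam a 0 = 0 := by
  simp [Hlog]

set_option maxHeartbeats 1000000 in
lemma omega_structure {μ lam : ℂ} {f : ℂ → ℂ} (hμ : 0 < μ.re) (hlam : ‖lam‖ < 1)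
    (hf : memFlam μ lam f) :
    ∃ ω : ℂ → ℂ, DifferentiableOn ℂ ω (Metric.ball (0:ℂ) 1) ∧ ω 0 = lam ∧
      (∀ ζ ∈ Metric.ball (0:ℂ) 1, ‖ω ζ‖ < 1) ∧
      (∀ ζ ∈ Metric.ball (0:ℂ) 1,
        deriv f ζ * ((1 - ζ * ω ζ) * (1 - ζ)) = f ζ * (μ / (Real.pi:ℂ)) * (ω ζ - 1)) ∧
      (∀ z ∈ Metric.ball (0:ℂ) 1, z ≠ 0 →
        Complex.normSq (ω z - lam)
          = Complex.normSq z * Complex.normSq (1 - (starRingEnd ℂ) lam * ω z) →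
        ∃ a : ℂ, ‖a‖ = 1 ∧ ∀ ζ ∈ Metric.ball (0:ℂ) 1, ω ζ = dl lam (a * ζ)) := by
  obtain ⟨⟨hfa, hfne, hf0, hre⟩, hd0⟩ := hf
  have hU : (unitDisk : Set ℂ) = Metric.ball (0:ℂ) 1 := rfl
  rw [hU] at hfa hfne hre
  have hπ : (Real.pi : ℂ) ≠ 0 := Complex.ofReal_ne_zero.mpr Real.pi_ne_zero
  have hμ0 : μ ≠ 0 := fun h => by simp [h] at hμ
  have h0mem : (0:ℂ) ∈ Metric.ball (0:ℂ) 1 := by simp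
  set p : ℂ → ℂ := Pfun μ f with hp
  have hp_an : ∀ ζ ∈ Metric.ball (0:ℂ) 1, AnalyticAt ℂ p ζ := by
    intro ζ hζ
    have h1 : AnalyticAt ℂ f ζ := hfa ζ hζ
    have h2 : AnalyticAt ℂ (deriv f) ζ := hfa.deriv ζ hζ
    have hne : f ζ ≠ 0 := hfne ζ hζ
    have hζ1 : (1:ℂ) - ζ ≠ 0 := one_sub_ne_zero_of_abs_lt (mem_ball_abs hζ)
    have heq : p = fun z : ℂ => 2 * (Real.pi:ℂ) / μ * (z * deriv f z / f z) + (1 + z) / (1 - z) :=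
      rfl
    rw [heq]
    exact (analyticAt_const.mul ((analyticAt_id.mul h2).div h1 hne)).add
      ((analyticAt_const.add analyticAt_id).div (analyticAt_const.sub analyticAt_id) hζ1)
  have hp0 : p 0 = 1 := by simp [hp, Pfun]
  have hp1 : ∀ ζ ∈ Metric.ball (0:ℂ) 1, p ζ + 1 ≠ 0 := by
    intro ζ hζ h
    have h1 : (p ζ + 1).re = 0 := by rw [h]; simp
    have h2 := hre ζ hζ
    simp only [Complex.add_re, Complex.one_re] at h1
    have : 0 < (Pfun μ f ζ).re := h2
    rw [← hp] at this
    linarith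
  set h : ℂ → ℂ := fun ζ => (p ζ - 1) / (p ζ + 1) with hh
  have hh_diff : DifferentiableOn ℂ h (Metric.ball (0:ℂ) 1) := fun ζ hζ =>
    ((((hp_an ζ hζ).sub analyticAt_const).div ((hp_an ζ hζ).add analyticAt_const)
      (hp1 ζ hζ)).differentiableAt).differentiableWithinAt
  have hh0 : h 0 = 0 := by simp [hh, hp0]
  have hhlt : ∀ ζ ∈ Metric.ball (0:ℂ) 1, ‖h ζ‖ < 1 := by
    intro ζ hζ
    have hq : Complex.normSq (p ζ + 1) - Complex.normSq (p ζ - 1) = 4 * (p ζ).re := by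
      simp only [Complex.normSq_apply, Complex.add_re, Complex.sub_re, Complex.add_im,
        Complex.sub_im, Complex.one_re, Complex.one_im]
      ring
    have hpre : 0 < (p ζ).re := hre ζ hζ
    have habs : ‖p ζ - 1‖ < ‖p ζ + 1‖ := by
      nlinarith [Complex.sq_norm (p ζ - 1), Complex.sq_norm (p ζ + 1),
        norm_nonneg (p ζ - 1), norm_nonneg (p ζ + 1)]
    rw [hh]
    simp only [norm_div]
    rw [div_lt_one (lt_of_le_of_lt (norm_nonneg _) habs)]
    exact habs
  have hmaps : Set.MapsTo h (Metric.ball (0:ℂ) 1) (Metric.ball (h 0) 1) := by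
    intro ζ hζ
    rw [hh0]
    simpa [Metric.mem_ball, Complex.dist_eq] using hhlt ζ hζ
  set ω : ℂ → ℂ := dslope h 0 with hω
  -- deriv h 0 = lam
  have hQ : HasDerivAt (fun ζ : ℂ => ζ * deriv f ζ / f ζ) (deriv f 0) 0 := by
    have hN : HasDerivAt (fun ζ : ℂ => ζ * deriv f ζ)
        (1 * deriv f 0 + 0 * deriv (deriv f) 0) 0 :=
      (hasDerivAt_id 0).mul ((hfa.deriv 0 h0mem).differentiableAt.hasDerivAt)
    have hD : HasDerivAt f (deriv f 0) 0 := (hfa 0 h0mem).differentiableAt.hasDerivAt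
    have hne : f 0 ≠ 0 := hfne 0 h0mem
    have := hN.div hD hne
    exact this.congr_deriv (by rw [hf0]; simp)
  have hL : HasDerivAt (fun ζ : ℂ => (1 + ζ) / (1 - ζ)) 2 0 := by
    have h1 : HasDerivAt (fun ζ : ℂ => 1 + ζ) 1 0 := by
      simpa using (hasDerivAt_id (0:ℂ)).const_add 1
    have h2 : HasDerivAt (fun ζ : ℂ => 1 - ζ) (-1) 0 := by
      simpa using (hasDerivAt_id (0:ℂ)).const_sub 1
    have hne : (1:ℂ) - 0 ≠ 0 := by norm_num
    have := h1.div h2 hne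
    exact this.congr_deriv (by norm_num)
  have hP : HasDerivAt p (2 * (Real.pi:ℂ) / μ * deriv f 0 + 2) 0 := by
    have heq : p = fun z : ℂ => 2 * (Real.pi:ℂ) / μ * (z * deriv f z / f z) + (1 + z) / (1 - z) :=
      rfl
    rw [heq]
    exact (hQ.const_mul (2 * (Real.pi:ℂ) / μ)).add hL
  have hH0 : HasDerivAt h (((2 * (Real.pi:ℂ) / μ * deriv f 0 + 2) * (p 0 + 1)
      - (p 0 - 1) * (2 * (Real.pi:ℂ) / μ * deriv f 0 + 2)) / (p 0 + 1) ^ 2) 0 :=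
    (hP.sub_const 1).div (hP.add_const 1) (hp1 0 h0mem)
  have hdh0 : deriv h 0 = lam := by
    rw [hH0.deriv, hp0, hd0]
    field_simp
    ring
  have hω0 : ω 0 = lam := by rw [hω, dslope_same, hdh0]
  have hωd : DifferentiableOn ℂ ω (Metric.ball (0:ℂ) 1) :=
    (differentiableOn_dslope (Metric.ball_mem_nhds 0 one_pos)).mpr hh_diff
  have hω_le : ∀ ζ ∈ Metric.ball (0:ℂ) 1, ‖ω ζ‖ ≤ 1 := by
    intro ζ hζ
    have := Complex.norm_dslope_le_div_of_mapsTo_ball hh_diff (hmaps.mono_right Metric.ball_subset_closedBall) hζ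
    simpa using this
  have hω_lt : ∀ ζ ∈ Metric.ball (0:ℂ) 1, ‖ω ζ‖ < 1 := by
    intro ζ hζ
    rcases lt_or_eq_of_le (hω_le ζ hζ) with h' | h'
    · exact h'
    · exfalso
      have hmax : IsMaxOn (norm ∘ ω) (Metric.ball (0:ℂ) 1) ζ := by
        intro x hx
        simp only [Set.mem_setOf_eq, Function.comp_apply]
        rw [h']
        exact hω_le x hx
      have := Complex.eqOn_of_isPreconnected_of_isMaxOn_norm
        (convex_ball (0:ℂ) 1).isPreconnected Metric.isOpen_ball hωd hζ hmax h0mem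
      simp only [Function.const_apply] at this
      rw [hω0] at this
      rw [← this] at h'
      linarith [hlam]
  have hω_eq : ∀ ζ ∈ Metric.ball (0:ℂ) 1, h ζ = ζ * ω ζ := by
    intro ζ _
    rcases eq_or_ne ζ 0 with rfl | hζ0
    · simp [hh0]
    · rw [hω, dslope_of_ne h hζ0, slope_def_field, hh0]
      field_simp
      ring
  have hiii : ∀ ζ ∈ Metric.ball (0:ℂ) 1,
      deriv f ζ * ((1 - ζ * ω ζ) * (1 - ζ)) = f ζ * (μ / (Real.pi:ℂ)) * (ω ζ - 1) := by
    intro ζ hζ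
    rcases eq_or_ne ζ 0 with rfl | hζ0
    · rw [hd0, hf0, hω0]
      ring
    · have hkey : h ζ * (p ζ + 1) = p ζ - 1 := by
        show (p ζ - 1) / (p ζ + 1) * (p ζ + 1) = p ζ - 1
        rw [div_mul_cancel₀ _ (hp1 ζ hζ)]
      rw [hω_eq ζ hζ] at hkey
      have hPdef : p ζ = 2 * (Real.pi:ℂ) / μ * (ζ * deriv f ζ / f ζ) + (1 + ζ) / (1 - ζ) := rfl
      rw [hPdef] at hkey
      have hfζ : f ζ ≠ 0 := hfne ζ hζ
      have hζ1 : (1:ℂ) - ζ ≠ 0 := one_sub_ne_zero_of_abs_lt (mem_ball_abs hζ)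
      field_simp at hkey
      have hD' : (2*ζ) * ((Real.pi:ℂ) * (deriv f ζ * ((1 - ζ * ω ζ) * (1 - ζ))))
          = (2*ζ) * (μ * f ζ * (ω ζ - 1)) := by
        linear_combination (-1 : ℂ) * hkey
      have hD'' := mul_left_cancel₀ (mul_ne_zero two_ne_zero hζ0) hD'
      have hfin : deriv f ζ * ((1 - ζ * ω ζ) * (1 - ζ)) = μ * f ζ * (ω ζ - 1) / (Real.pi:ℂ) := by
        rw [eq_div_iff hπ]; linear_combination hD''
      rw [hfin]; ring
  refine ⟨ω, hωd, hω0, hω_lt, hiii, ?_⟩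
  intro z hz hz0 hEq
  have hden : ∀ ζ ∈ Metric.ball (0:ℂ) 1, (1:ℂ) - (starRingEnd ℂ) lam * ω ζ ≠ 0 := fun ζ hζ =>
    one_sub_conj_mul_ne hlam (hω_lt ζ hζ).le
  set ψ : ℂ → ℂ := fun ζ => (ω ζ - lam) / (1 - (starRingEnd ℂ) lam * ω ζ) with hψ
  have hψ_diff : DifferentiableOn ℂ ψ (Metric.ball (0:ℂ) 1) := by
    apply DifferentiableOn.div (hωd.sub (differentiableOn_const _))
      ((differentiableOn_const _).sub ((differentiableOn_const _).mul hωd))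
    exact hden
  have hψ0 : ψ 0 = 0 := by simp [hψ, hω0]
  have hψ_lt : ∀ ζ ∈ Metric.ball (0:ℂ) 1, ‖ψ ζ‖ < 1 := fun ζ hζ =>
    abs_moebius_lt_one hlam (hω_lt ζ hζ)
  have hmapsψ : Set.MapsTo ψ (Metric.ball (0:ℂ) 1) (Metric.ball (ψ 0) 1) := by
    intro ζ hζ
    rw [hψ0]
    simpa [Metric.mem_ball, Complex.dist_eq] using hψ_lt ζ hζ
  have hψz : ‖ψ z‖ = ‖z‖ := by
    have hd := hden z hz
    have h1 : Complex.normSq (ψ z) = Complex.normSq z := by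
      rw [hψ]
      simp only [map_div₀ Complex.normSq]
      rw [hEq]
      field_simp [Complex.normSq_eq_zero.not.mpr hd]
    rw [Complex.norm_def, Complex.norm_def, h1]
  have hds : dslope ψ 0 z = ψ z / z := by
    rw [dslope_of_ne ψ hz0, slope_def_field, hψ0]
    simp
  have hnorm : ‖dslope ψ 0 z‖ = 1 / 1 := by
    rw [hds]
    rw [norm_div, hψz]
    rw [div_self (by simpa [norm_eq_zero] using hz0)]
    norm_num
  have haff := Complex.affine_of_mapsTo_ball_of_exists_norm_dslope_eq_div
    hψ_diff (hmapsψ.mono_right Metric.ball_subset_closedBall) hz hnorm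
  set a : ℂ := dslope ψ 0 z with ha
  have habs_a : ‖a‖ = 1 := by
    have := hnorm
    simpa using this
  refine ⟨a, habs_a, ?_⟩
  intro ζ hζ
  have hψζ : ψ ζ = ζ * a := by
    have := haff hζ
    simp only [hψ0, sub_zero, zero_add, smul_eq_mul] at this
    exact this
  have hd := hden ζ hζ
  have hψdef : ψ ζ * (1 - (starRingEnd ℂ) lam * ω ζ) = ω ζ - lam := by
    rw [hψ]
    exact div_mul_cancel₀ _ hd
  rw [hψζ] at hψdef
  have hden2 : (1:ℂ) + (starRingEnd ℂ) lam * (a * ζ) ≠ 0 := by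
    apply one_add_conj_mul_ne hlam
    rw [norm_mul, habs_a, one_mul]
    exact (mem_ball_abs hζ).le
  rw [dl, eq_div_iff hden2]
  linear_combination (-1 : ℂ) * hψdef

set_option maxHeartbeats 1000000 in
theorem stmt8 (μ lam : ℂ) (hμ : 0 < μ.re) (hlam : ‖lam‖ < 1)
    (f : ℂ → ℂ) (hf : memFlam μ lam f) (z : ℂ) (hz : z ∈ unitDisk) (hz0 : z ≠ 0) :
    ‖deriv f z / f z - μ / (Real.pi : ℂ) * cfun z lam‖ =
        ‖μ‖ / Real.pi * rfun z lam ↔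
      ∃ θ : ℝ, ∀ w ∈ unitDisk, f w = Hfun μ lam (Complex.exp (θ * Complex.I)) w := by
  have hπpos : (0:ℝ) < Real.pi := Real.pi_pos
  have hπ : (Real.pi:ℂ) ≠ 0 := Complex.ofReal_ne_zero.mpr Real.pi_ne_zero
  have hμ0 : μ ≠ 0 := fun h => by simp [h] at hμ
  have hzmem : z ∈ Metric.ball (0:ℂ) 1 := hz
  have hz' : ‖z‖ < 1 := mem_ball_abs hzmem
  have hz1 : (1:ℂ) - z ≠ 0 := one_sub_ne_zero_of_abs_lt hz'
  have hfz : f z ≠ 0 := hf.1.2.1 z hz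
  have h0mem : (0:ℂ) ∈ Metric.ball (0:ℂ) 1 := by simp
  have habsμπ : ‖μ / (Real.pi:ℂ)‖ = ‖μ‖ / Real.pi := by
    rw [norm_div, Complex.norm_real, Real.norm_eq_abs, abs_of_pos hπpos]
  have hμπpos : 0 < ‖μ‖ / Real.pi := div_pos (norm_pos_iff.mpr hμ0) hπpos
  constructor
  · -- forward direction
    intro hEq
    obtain ⟨ω, hωd, hω0, hωlt, hiii, hiv⟩ := omega_structure hμ hlam hf
    have hwlt : ‖ω z‖ < 1 := hωlt z hzmem
    have hzw : (1:ℂ) - z * ω z ≠ 0 := by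
      apply one_sub_ne_zero_of_abs_lt
      rw [norm_mul]
      nlinarith [norm_nonneg z, norm_nonneg (ω z)]
    have hX : ((1:ℂ) - z * ω z) * (1 - z) ≠ 0 := mul_ne_zero hzw hz1
    have hform : deriv f z / f z = μ/(Real.pi:ℂ) * ((ω z - 1)/((1 - z * ω z)*(1 - z))) := by
      have h3 := hiii z hzmem
      have h4 := congrArg (· / ((1 - z * ω z)*(1 - z))) h3
      simp only [mul_div_cancel_right₀ _ hX] at h4
      rw [div_eq_iff hfz, h4]
      ring
    have hsub : deriv f z / f z - μ/(Real.pi:ℂ) * cfun z lam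
        = μ/(Real.pi:ℂ) * ((ω z - 1)/((1 - z * ω z)*(1 - z)) - cfun z lam) := by
      rw [mul_sub, ← hform]
    rw [hsub, norm_mul, habsμπ] at hEq
    have hTc : ‖(ω z - 1)/((1 - z * ω z)*(1 - z)) - cfun z lam‖ = rfun z lam :=
      mul_left_cancel₀ hμπpos.ne' hEq
    have hB := (key_iff z lam (ω z) hz' hlam hwlt.le).mp hTc
    obtain ⟨a, habsa, hω_dl⟩ := hiv z hzmem hz0 hB
    obtain ⟨θ, hθ⟩ := (Complex.norm_eq_one_iff a).mp habsa
    refine ⟨θ, ?_⟩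
    rw [hθ]
    intro ζ hζmem
    have hζ : ζ ∈ Metric.ball (0:ℂ) 1 := hζmem
    -- derivative formula with dl everywhere
    have hfderiv : ∀ x ∈ Metric.ball (0:ℂ) 1, deriv f x
        = f x * (μ/(Real.pi:ℂ) * ((dl lam (a * x) - 1)/((1 - dl lam (a * x) * x)*(1 - x)))) := by
      intro x hx
      have hx' : ‖x‖ < 1 := mem_ball_abs hx
      have hu : ‖a * x‖ < 1 := by rw [norm_mul, habsa, one_mul]; exact hx'
      have hdl : ‖dl lam (a * x)‖ < 1 := abs_dl_lt_one hlam hu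
      have hXx : ((1:ℂ) - dl lam (a * x) * x) * (1 - x) ≠ 0 := by
        apply mul_ne_zero
        · apply one_sub_ne_zero_of_abs_lt
          rw [norm_mul]
          nlinarith [norm_nonneg x, norm_nonneg (dl lam (a * x))]
        · exact one_sub_ne_zero_of_abs_lt hx'
      have h3 := hiii x hx
      rw [hω_dl x hx] at h3
      have h3' : deriv f x * ((1 - dl lam (a * x) * x) * (1 - x))
          = f x * (μ / (Real.pi:ℂ)) * (dl lam (a * x) - 1) := by
        linear_combination h3
      have h4 := congrArg (· / ((1 - dl lam (a * x) * x)*(1 - x))) h3'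
      simp only [mul_div_cancel_right₀ _ hXx] at h4
      rw [h4]
      ring
    -- the function f x * exp (-Hlog x) is constant on the ball
    have hE : ∀ x ∈ Metric.ball (0:ℂ) 1,
        HasDerivAt (fun y => f y * Complex.exp (-(Hlog μ lam a y))) 0 x := by
      intro x hx
      have h1 : HasDerivAt f (deriv f x) x := (hf.1.1 x hx).differentiableAt.hasDerivAt
      have h2 := ((hasDerivAt_Hlog μ hlam habsa hx).neg).cexp
      have h4 := h1.mul h2
      refine h4.congr_deriv ?_
      rw [hfderiv x hx]
      ring
    have hconst : f ζ * Complex.exp (-(Hlog μ lam a ζ))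
        = f 0 * Complex.exp (-(Hlog μ lam a 0)) := by
      apply Convex.is_const_of_fderivWithin_eq_zero (convex_ball (0:ℂ) 1)
        (fun y hy => ((hE y hy).differentiableAt).differentiableWithinAt) ?_ hζ h0mem
      intro y hy
      rw [fderivWithin_of_isOpen Metric.isOpen_ball hy]
      have h5 := ((hE y hy).hasFDerivAt).fderiv
      rw [h5]
      ext
      simp
    rw [hf.1.2.2.1, Hlog_zero] at hconst
    simp only [one_mul, neg_zero, Complex.exp_zero] at hconst
    rw [Complex.exp_neg] at hconst
    have := (mul_inv_eq_one₀ (Complex.exp_ne_zero _)).mp hconst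
    exact this
  · -- backward direction
    rintro ⟨θ, hθ⟩
    set a : ℂ := Complex.exp (θ * Complex.I) with ha
    have habsa : ‖a‖ = 1 := Complex.norm_exp_ofReal_mul_I θ
    have hu : ‖a * z‖ < 1 := by rw [norm_mul, habsa, one_mul]; exact hz'
    have hdl : ‖dl lam (a * z)‖ < 1 := abs_dl_lt_one hlam hu
    have hev : f =ᶠ[nhds z] Hfun μ lam a :=
      Filter.eventuallyEq_of_mem (Metric.isOpen_ball.mem_nhds hzmem) (fun x hx => hθ x hx)
    have hHd : HasDerivAt (Hfun μ lam a)
        (Complex.exp (Hlog μ lam a z) * (μ/(Real.pi:ℂ)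
          * ((dl lam (a * z) - 1)/((1 - dl lam (a * z) * z)*(1 - z))))) z :=
      (hasDerivAt_Hlog μ hlam habsa hzmem).cexp
    have hdf : deriv f z = Complex.exp (Hlog μ lam a z) * (μ/(Real.pi:ℂ)
        * ((dl lam (a * z) - 1)/((1 - dl lam (a * z) * z)*(1 - z)))) := by
      rw [hev.deriv_eq]
      exact hHd.deriv
    have hfzH : f z = Complex.exp (Hlog μ lam a z) := hθ z hz
    have hratio : deriv f z / f z = μ/(Real.pi:ℂ)
        * ((dl lam (a * z) - 1)/((1 - dl lam (a * z) * z)*(1 - z))) := by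
      rw [hdf, hfzH]
      exact mul_div_cancel_left₀ _ (Complex.exp_ne_zero _)
    have hBB : Complex.normSq (dl lam (a * z) - lam)
        = Complex.normSq z * Complex.normSq (1 - (starRingEnd ℂ) lam * dl lam (a * z)) := by
      have h6 := normSq_dl_eq hlam hu
      have h7 : Complex.normSq a = 1 := by
        rw [← Complex.sq_norm, habsa]; norm_num
      rwa [Complex.normSq_mul, h7, one_mul] at h6
    have hTc := (key_iff z lam (dl lam (a * z)) hz' hlam hdl.le).mpr hBB
    have hsub : deriv f z / f z - μ/(Real.pi:ℂ) * cfun z lam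
        = μ/(Real.pi:ℂ) * ((dl lam (a * z) - 1)/((1 - z * dl lam (a * z))*(1 - z)) - cfun z lam) := by
      rw [mul_sub, hratio, mul_comm z (dl lam (a * z))]
    rw [hsub, norm_mul, habsμπ, hTc]
end

section
/- Let μ ∈ ℂ with Re μ > 0. For every f ∈ F_μ(0) (i.e. f ∈ F_μ with f'(0) = −μ/π) and every z ∈ D, |f'(z)/f(z) − μ(|z|²·conj(z) − 1)/(π(1 − z)(1 − |z|⁴))| ≤ |μ|·|z|/(π(1 − |z|⁴)). -/
open Complex Set Metric

open Filter

-- Lemma 1: Schwarz-Pick type inequality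
lemma mobius_ineq (a w : ℂ) (ha : ‖a‖ ≤ 1) (hw : ‖w‖ ≤ 1) :
    ‖w - a‖ ≤ ‖1 - (starRingEnd ℂ) a * w‖ := by
  have key : Complex.normSq (1 - (starRingEnd ℂ) a * w) - Complex.normSq (w - a)
      = (1 - Complex.normSq a) * (1 - Complex.normSq w) := by
    simp only [Complex.normSq_apply, Complex.sub_re, Complex.sub_im, Complex.mul_re,
      Complex.mul_im, Complex.one_re, Complex.one_im, Complex.conj_re, Complex.conj_im]
    ring
  have ha' : Complex.normSq a ≤ 1 := by
    have := Complex.sq_norm a; nlinarith [norm_nonneg a]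
  have hw' : Complex.normSq w ≤ 1 := by
    have := Complex.sq_norm w; nlinarith [norm_nonneg w]
  have h : Complex.normSq (w - a) ≤ Complex.normSq (1 - (starRingEnd ℂ) a * w) := by nlinarith
  rw [Complex.norm_def, Complex.norm_def]
  exact Real.sqrt_le_sqrt h

-- Lemma 2: double Schwarz
lemma schwarz_two (F : ℂ → ℂ) (hd : DifferentiableOn ℂ F (ball 0 1)) (h0 : F 0 = 0)
    (h1 : deriv F 0 = 0) (hm : MapsTo F (ball 0 1) (ball 0 1)) {z : ℂ} (hz : z ∈ ball (0:ℂ) 1) :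
    ∃ W : ℂ, ‖W‖ ≤ 1 ∧ F z = z ^ 2 * W := by
  rcases eq_or_ne z 0 with rfl | hz0
  · exact ⟨0, by simp, by simp [h0]⟩
  set g := dslope F 0 with hg
  have hmem : ball (0:ℂ) 1 ∈ nhds (0:ℂ) := ball_mem_nhds _ one_pos
  have hgd : DifferentiableOn ℂ g (ball 0 1) :=
    (Complex.differentiableOn_dslope hmem).2 hd
  have hg0 : g 0 = 0 := by simp [hg, dslope_same, h1]
  have hm' : MapsTo F (ball 0 1) (ball (F 0) 1) := by rwa [h0]
  have hgle : ∀ ζ ∈ ball (0:ℂ) 1, ‖g ζ‖ ≤ 1 := by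
    intro ζ hζ
    have := Complex.norm_dslope_le_div_of_mapsTo_ball hd (hm'.mono_right ball_subset_closedBall) hζ
    simpa using this
  have hzlt : ‖z‖ < 1 := by simpa [Complex.dist_eq] using hz
  set W := dslope g 0 z with hWdef
  have key : ∀ r : ℝ, ‖z‖ < r → r < 1 → ‖W‖ ≤ (2 - r) / r := by
    intro r hr1 hr2
    have hrpos : 0 < r := lt_of_le_of_lt (norm_nonneg z) hr1
    have hsub : ball (0:ℂ) r ⊆ ball 0 1 := ball_subset_ball hr2.le
    have hmaps : MapsTo g (ball 0 r) (ball (g 0) (2 - r)) := by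
      intro ζ hζ
      rw [hg0, mem_ball_zero_iff]
      calc ‖g ζ‖ ≤ 1 := hgle ζ (hsub hζ)
        _ < 2 - r := by linarith
    exact Complex.norm_dslope_le_div_of_mapsTo_ball (hgd.mono hsub) (hmaps.mono_right ball_subset_closedBall)
      (by simpa [Complex.dist_eq] using hr1)
  have hW1 : ‖W‖ ≤ 1 := by
    have hlim : Tendsto (fun r : ℝ => (2 - r) / r) (nhdsWithin 1 (Set.Iio 1)) (nhds 1) := by
      have : Tendsto (fun r : ℝ => (2 - r) / r) (nhds 1) (nhds ((2 - 1) / 1)) := by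
        apply Tendsto.div
        · exact (continuous_const.sub continuous_id).tendsto 1
        · exact continuous_id.tendsto 1
        · norm_num
      norm_num at this
      exact this.mono_left nhdsWithin_le_nhds
    have hev : ∀ᶠ r in nhdsWithin (1:ℝ) (Set.Iio 1), ‖W‖ ≤ (2 - r) / r := by
      have h1' : ∀ᶠ r in nhdsWithin (1:ℝ) (Set.Iio 1), ‖z‖ < r :=
        ((eventually_gt_nhds hzlt).filter_mono nhdsWithin_le_nhds)
      have h2' : ∀ᶠ r in nhdsWithin (1:ℝ) (Set.Iio 1), r < 1 :=
        eventually_mem_nhdsWithin.mono (fun r hr => hr)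
      filter_upwards [h1', h2'] with r hra hrb using key r hra hrb
    exact ge_of_tendsto hlim hev
  refine ⟨W, hW1, ?_⟩
  have hgz : g z = z * W := by
    rw [hWdef, dslope_of_ne _ hz0, slope_def_field, hg0]
    field_simp
    ring
  have h' : dslope F 0 z = slope F 0 z := dslope_of_ne _ hz0
  have h2 : slope F 0 z = z * W := by rw [← h', ← hg]; exact hgz
  rw [slope_def_field, h0, sub_zero, sub_zero] at h2
  rw [div_eq_iff hz0] at h2
  rw [h2]; ring
theorem stmt9 (μ : ℂ) (hμ : 0 < μ.re)
    (f : ℂ → ℂ) (hf : memFlam μ 0 f) (z : ℂ) (hz : z ∈ unitDisk) :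
    ‖(deriv f z / f z -
        μ * ((‖z‖ : ℂ) ^ 2 * (starRingEnd ℂ) z - 1) /
          ((Real.pi : ℂ) * (1 - z) * (1 - (‖z‖ : ℂ) ^ 4)))‖ ≤
      ‖μ‖ * ‖z‖ / (Real.pi * (1 - ‖z‖ ^ 4)) := by
  obtain ⟨⟨hfa, hfne, hf0, hpre⟩, hf'0⟩ := hf
  have hπ : (Real.pi : ℂ) ≠ 0 := by
    simpa using Complex.ofReal_ne_zero.2 Real.pi_ne_zero
  have hμ0 : μ ≠ 0 := fun h => by simp [h] at hμ
  have hder0 : deriv f 0 = -(μ / (Real.pi : ℂ)) := by rw [hf'0]; ring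
  have hzlt : ‖z‖ < 1 := by
    simpa [unitDisk, Complex.dist_eq] using hz
  rcases eq_or_ne z 0 with rfl | hz0
  · have hinner : deriv f (0:ℂ) / f 0 -
        μ * ((‖(0:ℂ)‖ : ℂ) ^ 2 * (starRingEnd ℂ) (0:ℂ) - 1) /
          ((Real.pi : ℂ) * (1 - 0) * (1 - (‖(0:ℂ)‖ : ℂ) ^ 4)) = 0 := by
      rw [hder0, hf0]
      simp
      ring
    rw [hinner]
    simp [Real.pi_pos.le]
  -- main case
  have h0mem : (0:ℂ) ∈ unitDisk := by simp [unitDisk]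
  have hzmem : z ∈ ball (0:ℂ) 1 := hz
  set p : ℂ → ℂ := Pfun μ f with hpdef
  have hderiv_an : AnalyticOnNhd ℂ (deriv f) unitDisk := hfa.deriv
  have hone_sub : ∀ ζ ∈ ball (0:ℂ) 1, (1:ℂ) - ζ ≠ 0 := by
    intro ζ hζ
    rw [sub_ne_zero]
    intro h
    rw [← h] at hζ
    simp [Complex.dist_eq] at hζ
  have hp_diff : DifferentiableOn ℂ p (ball 0 1) := by
    apply DifferentiableOn.add
    · exact (differentiableOn_const _).mul
        ((differentiableOn_id.mul hderiv_an.differentiableOn).div hfa.differentiableOn hfne)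
    · exact ((differentiableOn_const _).add differentiableOn_id).div
        ((differentiableOn_const _).sub differentiableOn_id) hone_sub
  have hp1 : ∀ ζ ∈ ball (0:ℂ) 1, p ζ + 1 ≠ 0 := by
    intro ζ hζ h
    have h2 := hpre ζ hζ
    have : (p ζ + 1).re = 0 := by rw [h]; simp
    simp only [Complex.add_re, Complex.one_re] at this
    change 0 < (p ζ).re at h2
    linarith
  set ω : ℂ → ℂ := fun ζ => (p ζ - 1) / (p ζ + 1) with hωdef
  have hω_d : DifferentiableOn ℂ ω (ball 0 1) :=
    (hp_diff.sub_const 1).div (hp_diff.add_const 1) hp1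
  have hω_maps : MapsTo ω (ball 0 1) (ball 0 1) := by
    intro ζ hζ
    rw [mem_ball_zero_iff]
    have h2 : 0 < (p ζ).re := hpre ζ hζ
    have hns : Complex.normSq (p ζ - 1) < Complex.normSq (p ζ + 1) := by
      have : Complex.normSq (p ζ + 1) - Complex.normSq (p ζ - 1) = 4 * (p ζ).re := by
        simp only [Complex.normSq_apply, Complex.add_re, Complex.add_im, Complex.sub_re,
          Complex.sub_im, Complex.one_re, Complex.one_im]
        ring
      linarith
    have habs : ‖p ζ - 1‖ < ‖p ζ + 1‖ := by
      rw [Complex.norm_def, Complex.norm_def]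
      exact Real.sqrt_lt_sqrt (Complex.normSq_nonneg _) hns
    show ‖(p ζ - 1) / (p ζ + 1)‖ < 1
    rw [norm_div]
    rw [div_lt_one (lt_of_le_of_lt (norm_nonneg _) habs)]
    exact habs
  have hp0 : p 0 = 1 := by simp [hpdef, Pfun, hf0]
  have hω0 : ω 0 = 0 := by simp [hωdef, hp0]
  -- derivative of p at 0
  have hfd0 : HasDerivAt f (deriv f 0) 0 := (hfa 0 h0mem).differentiableAt.hasDerivAt
  have hfd0' : HasDerivAt (deriv f) (deriv (deriv f) 0) 0 :=
    (hderiv_an 0 h0mem).differentiableAt.hasDerivAt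
  have hnum : HasDerivAt (fun ζ : ℂ => ζ * deriv f ζ)
      (1 * deriv f 0 + (0:ℂ) * deriv (deriv f) 0) 0 := (hasDerivAt_id 0).mul hfd0'
  have hquot : HasDerivAt (fun ζ : ℂ => ζ * deriv f ζ / f ζ)
      (((1 * deriv f 0 + (0:ℂ) * deriv (deriv f) 0) * f 0 - (0:ℂ) * deriv f 0 * deriv f 0) / f 0 ^ 2)
      0 := hnum.div hfd0 (by rw [hf0]; exact one_ne_zero)
  have hmob : HasDerivAt (fun ζ : ℂ => (1 + ζ) / (1 - ζ))
      ((1 * (1 - 0) - (1 + 0) * (-1)) / (1 - 0) ^ 2) 0 := by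
    exact ((hasDerivAt_id (0:ℂ)).const_add 1).div (((hasDerivAt_id (0:ℂ)).const_sub 1))
      (by norm_num)
  have hPd : HasDerivAt p
      (2 * (Real.pi : ℂ) / μ * (((1 * deriv f 0 + (0:ℂ) * deriv (deriv f) 0) * f 0
        - (0:ℂ) * deriv f 0 * deriv f 0) / f 0 ^ 2) + (1 * (1 - 0) - (1 + 0) * (-1)) / (1 - 0) ^ 2)
      0 := (hquot.const_mul (2 * (Real.pi : ℂ) / μ)).add hmob
  have hval : (2 * (Real.pi : ℂ) / μ * (((1 * deriv f 0 + (0:ℂ) * deriv (deriv f) 0) * f 0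
        - (0:ℂ) * deriv f 0 * deriv f 0) / f 0 ^ 2) + (1 * (1 - 0) - (1 + 0) * (-1)) / (1 - 0) ^ 2)
      = 0 := by
    rw [hf0, hder0]
    field_simp
    ring
  rw [hval] at hPd
  have hωd0 : HasDerivAt ω ((0 * (p 0 + 1) - (p 0 - 1) * 0) / (p 0 + 1) ^ 2) 0 :=
    (hPd.sub_const 1).div (hPd.add_const 1) (hp1 0 h0mem)
  have hω'0 : deriv ω 0 = 0 := by
    have := hωd0.deriv
    rw [this]; ring
  -- Schwarz
  obtain ⟨W, hW1, hωz⟩ := schwarz_two ω hω_d hω0 hω'0 hω_maps hzmem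
  -- algebra
  set u : ℂ := (starRingEnd ℂ) z with hudef
  have hu2 : ((‖z‖ : ℂ)) ^ 2 = z * u := by
    rw [hudef, Complex.mul_conj, ← Complex.sq_norm]
    norm_cast
  have hu4 : ((‖z‖ : ℂ)) ^ 4 = z ^ 2 * u ^ 2 := by
    have : ((‖z‖ : ℂ)) ^ 4 = (((‖z‖ : ℂ)) ^ 2) ^ 2 := by ring
    rw [this, hu2]; ring
  have habsu : ‖u‖ = ‖z‖ := Complex.norm_conj z
  have hz2W : ‖z ^ 2 * W‖ < 1 := by
    calc ‖z ^ 2 * W‖ = ‖z‖ ^ 2 * ‖W‖ := by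
          rw [norm_mul, norm_pow]
      _ ≤ ‖z‖ ^ 2 * 1 := by
          apply mul_le_mul_of_nonneg_left hW1 (by positivity)
      _ < 1 := by nlinarith [norm_nonneg z]
  have h1zW : (1:ℂ) - z ^ 2 * W ≠ 0 := by
    rw [sub_ne_zero]
    intro h
    rw [← h] at hz2W
    simp at hz2W
  have h1z4 : (1:ℂ) - z ^ 2 * u ^ 2 ≠ 0 := by
    rw [sub_ne_zero]
    intro h
    have : ‖z ^ 2 * u ^ 2‖ = 1 := by rw [← h]; simp
    rw [norm_mul, norm_pow, norm_pow, habsu] at this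
    have h2 : ‖z‖ ^ 2 < 1 := by nlinarith [norm_nonneg z]
    nlinarith [norm_nonneg z]
  have h1z : (1:ℂ) - z ≠ 0 := hone_sub z hzmem
  -- the relation defining P
  have homz : ω z = z ^ 2 * W := hωz
  have hPrel : p z - 1 = z ^ 2 * W * (p z + 1) := by
    have h : (p z - 1) / (p z + 1) = z ^ 2 * W := homz
    exact (div_eq_iff (hp1 z hzmem)).1 h
  have hfz : f z ≠ 0 := hfne z hz
  have hPdefz : p z = 2 * (Real.pi : ℂ) / μ * (z * deriv f z / f z) + (1 + z) / (1 - z) := rfl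
  have hkey2 : deriv f z * ((Real.pi : ℂ) * (1 - z ^ 2 * W) * (1 - z)) * (2 * z)
      = f z * (μ * (z * W - 1)) * (2 * z) := by
    have h := hPrel
    rw [hPdefz] at h
    field_simp [hfz, hμ0, hπ, h1z] at h
    linear_combination h
  have hkey : deriv f z * ((Real.pi : ℂ) * (1 - z ^ 2 * W) * (1 - z))
      = f z * (μ * (z * W - 1)) :=
    mul_right_cancel₀ (mul_ne_zero two_ne_zero hz0) hkey2
  have hFval : deriv f z / f z = μ * (z * W - 1) / ((Real.pi : ℂ) * (1 - z ^ 2 * W) * (1 - z)) := by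
    rw [div_eq_div_iff hfz (mul_ne_zero (mul_ne_zero hπ h1zW) h1z)]
    linear_combination hkey
  have hDiff : deriv f z / f z -
      μ * ((‖z‖ : ℂ) ^ 2 * u - 1) /
        ((Real.pi : ℂ) * (1 - z) * (1 - (‖z‖ : ℂ) ^ 4))
      = μ * z * (W - u ^ 2) / ((Real.pi : ℂ) * ((1 - z ^ 2 * W) * (1 - z ^ 2 * u ^ 2))) := by
    rw [hFval, hu2, hu4]
    field_simp
    ring
  have hbnd : ‖W - u ^ 2‖ ≤ ‖1 - z ^ 2 * W‖ := by
    have hau : ‖u ^ 2‖ ≤ 1 := by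
      rw [norm_pow, habsu]
      nlinarith [norm_nonneg z]
    have h := mobius_ineq (u ^ 2) W hau hW1
    have hc : (starRingEnd ℂ) (u ^ 2) = z ^ 2 := by
      rw [hudef, map_pow, Complex.conj_conj]
    rwa [hc] at h
  have h4pos : (0:ℝ) < 1 - ‖z‖ ^ 4 := by
    have := pow_lt_one₀ (norm_nonneg z) hzlt (by norm_num : (4:ℕ) ≠ 0)
    linarith
  have hreal4 : (1:ℂ) - ((‖z‖ : ℂ)) ^ 4 = ((1 - ‖z‖ ^ 4 : ℝ) : ℂ) := by
    push_cast
    ring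
  have habs14 : ‖(1:ℂ) - z ^ 2 * u ^ 2‖ = 1 - ‖z‖ ^ 4 := by
    rw [← hu4, hreal4, Complex.norm_real, Real.norm_eq_abs, abs_of_pos h4pos]
  have hd1 : 0 < ‖1 - z ^ 2 * W‖ := norm_pos_iff.2 h1zW
  have habsπ : ‖(Real.pi : ℂ)‖ = Real.pi := by
    rw [Complex.norm_real, Real.norm_eq_abs, abs_of_pos Real.pi_pos]
  rw [hDiff]
  simp only [norm_div, norm_mul]
  rw [habs14, habsπ]
  calc ‖μ‖ * ‖z‖ * ‖W - u ^ 2‖ /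
        (Real.pi * (‖1 - z ^ 2 * W‖ * (1 - ‖z‖ ^ 4)))
      ≤ ‖μ‖ * ‖z‖ * ‖1 - z ^ 2 * W‖ /
        (Real.pi * (‖1 - z ^ 2 * W‖ * (1 - ‖z‖ ^ 4))) := by
        have hden : (0:ℝ) ≤ Real.pi * (‖1 - z ^ 2 * W‖ * (1 - ‖z‖ ^ 4)) :=
          mul_nonneg Real.pi_pos.le (mul_nonneg (norm_nonneg _) h4pos.le)
        have hnum : ‖μ‖ * ‖z‖ * ‖W - u ^ 2‖ ≤
            ‖μ‖ * ‖z‖ * ‖1 - z ^ 2 * W‖ :=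
          mul_le_mul_of_nonneg_left hbnd (by positivity)
        exact div_le_div_of_nonneg_right hnum hden
    _ = ‖μ‖ * ‖z‖ / (Real.pi * (1 - ‖z‖ ^ 4)) := by
        field_simp
end
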